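/- arXiv:1307.5094 — 9 statements merged into one kernel-verified Lean document; each statement's English description precedes it below -/
import Mathlib

section
/- For every integer n > 1, δ(n-1) ≤ δ(n); that is, the minimum diameter over all double-(n-1) strings is at most the minimum diameter over all double-n strings. -/
/-- A double-`n` string: a sequence of length `2n` over `n` symbols in which
each symbol appears exactly twice. -/
def IsDoubleString (n : ℕ) (s : Fin (2 * n) → Fin n) : Prop :=
  ∀ a : Fin n, (Finset.univ.filter (fun i => s i = a)).card = 2

/-- The diameter of the string `s` is at most `d`: every pair of distinct
symbols has a pair of occurrences at positional distance at most `d`. -/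
def DiamLE (n d : ℕ) (s : Fin (2 * n) → Fin n) : Prop :=
  ∀ a b : Fin n, a ≠ b →
    ∃ i j : Fin (2 * n), s i = a ∧ s j = b ∧ Nat.dist i.val j.val ≤ d

/-- `delta n` : the minimum diameter over all double-`n` strings. -/
noncomputable def delta (n : ℕ) : ℕ :=
  sInf {d | ∃ s : Fin (2 * n) → Fin n, IsDoubleString n s ∧ DiamLE n d s}

lemma sm_aux {M : ℕ} (f : Fin M → ℕ) (hf : StrictMono f) :
    ∀ (t : ℕ) (k l : Fin M), (l : ℕ) = k + t → f k + t ≤ f l := by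
  intro t
  induction t with
  | zero =>
    intro k l h
    have : l = k := Fin.ext (by omega)
    simp [this]
  | succ t ih =>
    intro k l h
    have hl : (k : ℕ) + t < M := by omega
    have h1 := ih k ⟨(k : ℕ) + t, hl⟩ rfl
    have h2 : f ⟨(k : ℕ) + t, hl⟩ < f l := hf (by simp [Fin.lt_def]; omega)
    omega

lemma construct (m d : ℕ) (s : Fin (2 * (m + 1)) → Fin (m + 1))
    (hs : IsDoubleString (m + 1) s) (hd : DiamLE (m + 1) d s) :
    ∃ s' : Fin (2 * m) → Fin m, IsDoubleString m s' ∧ DiamLE m d s' := by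
  classical
  set T : Finset (Fin (2 * (m + 1))) :=
    Finset.univ.filter (fun i => ¬ s i = Fin.last m) with hTdef
  have hcard : T.card = 2 * m := by
    have h1 := Finset.card_filter_add_card_filter_not
      (s := (Finset.univ : Finset (Fin (2 * (m + 1))))) (p := fun i => s i = Fin.last m)
    have h2 := hs (Fin.last m)
    simp only [Finset.card_univ, Fintype.card_fin] at h1
    rw [hTdef]
    omega
  set f := T.orderEmbOfFin hcard with hfdef
  have hmemT : ∀ k, f k ∈ T := fun k => Finset.orderEmbOfFin_mem T hcard k
  have hne : ∀ k, ¬ s (f k) = Fin.last m := by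
    intro k
    have := hmemT k
    rw [hTdef, Finset.mem_filter] at this
    exact this.2
  refine ⟨fun k => Fin.castPred (s (f k)) (hne k), ?_, ?_⟩
  · -- IsDoubleString
    intro a
    trans (Finset.univ.filter (fun i => s i = Fin.castSucc a)).card
    swap
    · exact hs (Fin.castSucc a)
    apply Finset.card_bij (fun k _ => f k)
    · intro k hk
      rw [Finset.mem_filter] at hk ⊢
      refine ⟨Finset.mem_univ _, ?_⟩
      have := hk.2
      have : Fin.castSucc (Fin.castPred (s (f k)) (hne k)) = Fin.castSucc a :=
        congrArg Fin.castSucc this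
      simpa [Fin.castSucc_castPred] using this
    · intro k _ l _ h
      exact f.injective h
    · intro i hi
      rw [Finset.mem_filter] at hi
      have hiT : i ∈ T := by
        rw [hTdef, Finset.mem_filter]
        refine ⟨Finset.mem_univ _, ?_⟩
        rw [hi.2]
        exact (Fin.castSucc_lt_last _).ne
      have : i ∈ Set.range f := by
        rw [hfdef, Finset.range_orderEmbOfFin]
        exact hiT
      obtain ⟨k, hk⟩ := this
      refine ⟨k, ?_, hk⟩
      rw [Finset.mem_filter]
      refine ⟨Finset.mem_univ _, ?_⟩
      apply Fin.castSucc_injective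
      rw [Fin.castSucc_castPred, hk, hi.2]
  · -- DiamLE
    intro a b hab
    obtain ⟨i, j, hi, hj, hdist⟩ := hd (Fin.castSucc a) (Fin.castSucc b)
      (fun h => hab (Fin.castSucc_injective _ h))
    have hiT : i ∈ Set.range f := by
      rw [hfdef, Finset.range_orderEmbOfFin]
      rw [hTdef, Finset.mem_coe, Finset.mem_filter]
      exact ⟨Finset.mem_univ _, by rw [hi]; exact (Fin.castSucc_lt_last _).ne⟩
    have hjT : j ∈ Set.range f := by
      rw [hfdef, Finset.range_orderEmbOfFin]
      rw [hTdef, Finset.mem_coe, Finset.mem_filter]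
      exact ⟨Finset.mem_univ _, by rw [hj]; exact (Fin.castSucc_lt_last _).ne⟩
    obtain ⟨k, hk⟩ := hiT
    obtain ⟨l, hl⟩ := hjT
    have hsm : StrictMono (fun k => ((f k : Fin (2 * (m + 1))) : ℕ)) := by
      intro x y hxy
      exact Fin.lt_def.mp (f.strictMono hxy)
    have key : Nat.dist (k : ℕ) (l : ℕ) ≤ Nat.dist (i : ℕ) (j : ℕ) := by
      rcases le_total (k : ℕ) (l : ℕ) with h | h
      · have := sm_aux _ hsm ((l : ℕ) - k) k l (by omega)
        simp only [Nat.dist]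
        rw [← hk, ← hl]
        omega
      · have := sm_aux _ hsm ((k : ℕ) - l) l k (by omega)
        simp only [Nat.dist]
        rw [← hk, ← hl]
        omega
    refine ⟨k, l, ?_, ?_, le_trans key hdist⟩
    · apply Fin.castSucc_injective
      rw [Fin.castSucc_castPred, hk, hi]
    · apply Fin.castSucc_injective
      rw [Fin.castSucc_castPred, hl, hj]
lemma nonempty_aux (n : ℕ) :
    ∃ s : Fin (2 * n) → Fin n, IsDoubleString n s ∧ DiamLE n (2 * n) s := by
  refine ⟨fun i => ⟨(i : ℕ) / 2, by have := i.isLt; omega⟩, ?_, ?_⟩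
  · intro a
    have h1 : 2 * (a : ℕ) < 2 * n := by have := a.isLt; omega
    have h2 : 2 * (a : ℕ) + 1 < 2 * n := by have := a.isLt; omega
    have hset : (Finset.univ.filter
        (fun i : Fin (2 * n) => (⟨(i : ℕ) / 2, by have := i.isLt; omega⟩ : Fin n) = a))
        = {⟨2 * a, h1⟩, ⟨2 * a + 1, h2⟩} := by
      ext i
      simp only [Finset.mem_filter, Finset.mem_univ, true_and, Finset.mem_insert,
        Finset.mem_singleton, Fin.ext_iff]
      omega
    rw [hset, Finset.card_pair (by simp only [ne_eq, Fin.mk.injEq]; omega)]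
  · intro a b hab
    refine ⟨⟨2 * a, by have := a.isLt; omega⟩, ⟨2 * b, by have := b.isLt; omega⟩,
      Fin.ext (by simp), Fin.ext (by simp), ?_⟩
    simp only [Nat.dist]
    have := a.isLt
    have := b.isLt
    omega


/-- For every integer `n > 1`, `δ(n-1) ≤ δ(n)`. -/
theorem delta_mono (n : ℕ) (hn : 1 < n) : delta (n - 1) ≤ delta n := by
  obtain ⟨m, rfl⟩ : ∃ m, n = m + 1 := ⟨n - 1, by omega⟩
  simp only [Nat.add_sub_cancel]
  have hne : {d | ∃ s : Fin (2 * (m + 1)) → Fin (m + 1),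
      IsDoubleString (m + 1) s ∧ DiamLE (m + 1) d s}.Nonempty := by
    obtain ⟨s, h1, h2⟩ := nonempty_aux (m + 1)
    exact ⟨2 * (m + 1), s, h1, h2⟩
  have hmem : delta (m + 1) ∈ {d | ∃ s : Fin (2 * (m + 1)) → Fin (m + 1),
      IsDoubleString (m + 1) s ∧ DiamLE (m + 1) d s} := by
    rw [delta]; exact Nat.sInf_mem hne
  obtain ⟨s, hs, hd⟩ := hmem
  obtain ⟨s', hs', hd'⟩ := construct m _ s hs hd
  rw [delta]
  exact Nat.sInf_le ⟨s', hs', hd'⟩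
end

section
/- For every integer n > 2, δ(n) < n/2: there exists a double-n string whose diameter is strictly less than n/2. -/
def gswap (b1 b j : ℕ) : ℕ :=
  if j < b1 then j
  else if j < b1 + b then j + b
  else if j < b1 + 2 * b then j - b
  else j

lemma gswap_cases (b1 b j : ℕ) :
    (j < b1 ∧ gswap b1 b j = j) ∨
    (b1 ≤ j ∧ j < b1 + b ∧ gswap b1 b j = j + b) ∨
    (b1 + b ≤ j ∧ j < b1 + 2 * b ∧ gswap b1 b j = j - b) ∨
    (b1 + 2 * b ≤ j ∧ gswap b1 b j = j) := by
  unfold gswap; split_ifs <;> omega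

lemma gswap_lt (b1 b n j : ℕ) (h : b1 + 2 * b ≤ n) (hj : j < n) :
    gswap b1 b j < n := by
  unfold gswap; split_ifs <;> omega

lemma gswap_invol (b1 b j : ℕ) : gswap b1 b (gswap b1 b j) = j := by
  unfold gswap; split_ifs <;> omega

lemma key (n b1 b d A B gA gB : ℕ) (hn : 3 ≤ n)
    (hb : b = (n + 2) / 4) (hb1 : b1 = (n + 1 - 2 * b) / 2) (hd : d = (n - 1) / 2)
    (hA : A < n) (hB : B < n) (hAB : A ≠ B)
    (hgA : (A < b1 ∧ gA = A) ∨ (b1 ≤ A ∧ A < b1 + b ∧ gA = A + b) ∨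
      (b1 + b ≤ A ∧ A < b1 + 2 * b ∧ gA = A - b) ∨ (b1 + 2 * b ≤ A ∧ gA = A))
    (hgB : (B < b1 ∧ gB = B) ∨ (b1 ≤ B ∧ B < b1 + b ∧ gB = B + b) ∨
      (b1 + b ≤ B ∧ B < b1 + 2 * b ∧ gB = B - b) ∨ (b1 + 2 * b ≤ B ∧ gB = B)) :
    Nat.dist A B ≤ d ∨ Nat.dist (n + gA) (n + gB) ≤ d ∨
    Nat.dist A (n + gB) ≤ d ∨ Nat.dist (n + gA) B ≤ d := by
  simp only [Nat.dist]
  omega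


/-- For every integer `n > 2`, `δ(n) < n/2`: there exists a double-`n` string
whose diameter is strictly less than `n/2`. -/
theorem delta_lt_half (n : ℕ) (hn : 2 < n) :
    ∃ (s : Fin (2 * n) → Fin n) (d : ℕ),
      IsDoubleString n s ∧ DiamLE n d s ∧ 2 * d < n := by
  set b : ℕ := (n + 2) / 4 with hb
  set b1 : ℕ := (n + 1 - 2 * b) / 2 with hb1
  set d : ℕ := (n - 1) / 2 with hd
  have hblk : b1 + 2 * b ≤ n := by omega
  have hsub : ∀ i : Fin (2 * n), ¬ (i : ℕ) < n → (i : ℕ) - n < n := fun i hi => by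
    have := i.isLt; omega
  refine ⟨fun i => if h : (i : ℕ) < n then ⟨i, h⟩
    else ⟨gswap b1 b ((i : ℕ) - n), gswap_lt b1 b n _ hblk (hsub i h)⟩, d, ?_, ?_, by omega⟩
  · -- IsDoubleString
    intro a
    have hga : gswap b1 b (a : ℕ) < n := gswap_lt b1 b n _ hblk a.isLt
    rw [Finset.card_eq_two]
    refine ⟨⟨(a : ℕ), by omega⟩, ⟨n + gswap b1 b (a : ℕ), by omega⟩, ?_, ?_⟩
    · intro h
      have := congrArg Fin.val h
      simp at this
      omega
    · ext i
      simp only [Finset.mem_filter, Finset.mem_univ, true_and, Finset.mem_insert,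
        Finset.mem_singleton]
      constructor
      · intro h
        by_cases hi : (i : ℕ) < n
        · left
          rw [dif_pos hi] at h
          have := congrArg Fin.val h
          exact Fin.ext (by simpa using this)
        · right
          rw [dif_neg hi] at h
          have h2 : gswap b1 b ((i : ℕ) - n) = (a : ℕ) := congrArg Fin.val h
          have h3 : (i : ℕ) - n = gswap b1 b (a : ℕ) := by
            rw [← h2, gswap_invol]
          apply Fin.ext
          show (i : ℕ) = n + gswap b1 b (a : ℕ)
          have := i.isLt
          omega
      · intro h
        rcases h with h | h
        · subst h
          rw [dif_pos a.isLt]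
        · subst h
          have hge : ¬ ((n + gswap b1 b (a : ℕ) : ℕ) < n) := by
            show ¬ n + gswap b1 b (a : ℕ) < n
            omega
          rw [dif_neg ?_]
          · apply Fin.ext
            show gswap b1 b (n + gswap b1 b (a : ℕ) - n) = (a : ℕ)
            rw [Nat.add_sub_cancel_left, gswap_invol]
          · exact hge
  · -- DiamLE
    intro x y hxy
    have hgx : gswap b1 b (x : ℕ) < n := gswap_lt b1 b n _ hblk x.isLt
    have hgy : gswap b1 b (y : ℕ) < n := gswap_lt b1 b n _ hblk y.isLt
    have hne : (x : ℕ) ≠ (y : ℕ) := fun h => hxy (Fin.ext h)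
    have hK := key n b1 b d (x : ℕ) (y : ℕ) (gswap b1 b (x : ℕ)) (gswap b1 b (y : ℕ))
      (by omega) hb hb1 hd x.isLt y.isLt hne (gswap_cases b1 b _) (gswap_cases b1 b _)
    have hfst : ∀ z : Fin n, ∀ h : (z : ℕ) < 2 * n,
        (if h' : ((⟨(z : ℕ), h⟩ : Fin (2 * n)) : ℕ) < n then (⟨_, h'⟩ : Fin n)
          else ⟨gswap b1 b _, gswap_lt b1 b n _ hblk (hsub _ h')⟩) = z := by
      intro z h
      rw [dif_pos (show ((⟨(z : ℕ), h⟩ : Fin (2 * n)) : ℕ) < n from z.isLt)]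
    have hsnd : ∀ z : Fin n, ∀ h : n + gswap b1 b (z : ℕ) < 2 * n,
        (if h' : ((⟨n + gswap b1 b (z : ℕ), h⟩ : Fin (2 * n)) : ℕ) < n then (⟨_, h'⟩ : Fin n)
          else ⟨gswap b1 b _, gswap_lt b1 b n _ hblk (hsub _ h')⟩) = z := by
      intro z h
      rw [dif_neg (show ¬ ((⟨n + gswap b1 b (z : ℕ), h⟩ : Fin (2 * n)) : ℕ) < n by
        show ¬ n + gswap b1 b (z : ℕ) < n; omega)]
      apply Fin.ext
      show gswap b1 b (n + gswap b1 b (z : ℕ) - n) = (z : ℕ)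
      rw [Nat.add_sub_cancel_left, gswap_invol]
    rcases hK with hK | hK | hK | hK
    · exact ⟨⟨(x : ℕ), by omega⟩, ⟨(y : ℕ), by omega⟩, hfst x _, hfst y _, hK⟩
    · exact ⟨⟨n + gswap b1 b (x : ℕ), by omega⟩, ⟨n + gswap b1 b (y : ℕ), by omega⟩,
        hsnd x _, hsnd y _, hK⟩
    · exact ⟨⟨(x : ℕ), by omega⟩, ⟨n + gswap b1 b (y : ℕ), by omega⟩, hfst x _, hsnd y _, hK⟩
    · exact ⟨⟨n + gswap b1 b (x : ℕ), by omega⟩, ⟨(y : ℕ), by omega⟩, hsnd x _, hfst y _, hK⟩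
end

section
/- If n = 4r for a positive integer r, then the double-n string S1 S2 S3 S4 S1 S3 S2 S4, where Si is the block (i-1)r+1, ..., ir, has diameter 2r - 1; in particular δ(4r) ≤ 2r - 1. -/
def pat : ℕ → ℕ
  | 0 => 0 | 1 => 1 | 2 => 2 | 3 => 3 | 4 => 0 | 5 => 2 | 6 => 1 | 7 => 3 | _ => 0

lemma pat_le (b : ℕ) : pat b ≤ 3 := by
  rcases b with _|_|_|_|_|_|_|_|b <;> simp [pat]

lemma matrix_pat (b : ℕ) (hb : b < 8) (h : b % 8 < 8) :
    (![0, 1, 2, 3, 0, 2, 1, 3] : Fin 8 → ℕ) ⟨b % 8, h⟩ = pat b := by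
  interval_cases b <;> rfl

lemma dstr_divmod (r x m : ℕ) (hr : 0 < r) (hm : m < r) :
    (x * r + m) / r = x ∧ (x * r + m) % r = m := by
  constructor
  · rw [Nat.mul_comm x r, Nat.mul_add_div hr, Nat.div_eq_of_lt hm, Nat.add_zero]
  · rw [Nat.mul_comm x r, Nat.mul_add_mod, Nat.mod_eq_of_lt hm]

lemma pat_adj : ∀ qa < 4, ∀ qb < 4, ∃ βa < 8, ∃ βb < 8,
    pat βa = qa ∧ pat βb = qb ∧ (βa = βb ∨ βa + 1 = βb ∨ βb + 1 = βa) := by decide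

lemma pat_blocks : ∀ q < 4, ∃ β1 β2, β1 < β2 ∧ β2 < 8 ∧ pat β1 = q ∧ pat β2 = q ∧
    ∀ β < 8, pat β = q → β = β1 ∨ β = β2 := by
  intro q hq
  interval_cases q
  · exact ⟨0, 4, by norm_num, by norm_num, rfl, rfl, by decide⟩
  · exact ⟨1, 6, by norm_num, by norm_num, rfl, rfl, by decide⟩
  · exact ⟨2, 5, by norm_num, by norm_num, rfl, rfl, by decide⟩
  · exact ⟨3, 7, by norm_num, by norm_num, rfl, rfl, by decide⟩

lemma mem_char (r : ℕ) (hr : 0 < r) (i : Fin (2 * (4 * r))) (a : Fin (4 * r)) :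
    (⟨((![0, 1, 2, 3, 0, 2, 1, 3] : Fin 8 → ℕ)
        ⟨i.val / r % 8, Nat.mod_lt _ (by decide)⟩ * r + i.val % r) % (4 * r),
      Nat.mod_lt _ (Nat.mul_pos (by decide) hr)⟩ : Fin (4 * r)) = a ↔
    pat (i.val / r) = a.val / r ∧ i.val % r = a.val % r := by
  have hi8 : i.val / r < 8 := Nat.div_lt_of_lt_mul (by have := i.isLt; omega)
  have hmod : i.val % r < r := Nat.mod_lt _ hr
  have hle : pat (i.val / r) ≤ 3 := pat_le _
  have hle' : pat (i.val / r) * r ≤ 3 * r := Nat.mul_le_mul_right r hle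
  rw [Fin.ext_iff]
  simp only [Fin.val_mk]
  rw [matrix_pat _ hi8, Nat.mod_eq_of_lt (by omega)]
  constructor
  · intro h
    have hd := (dstr_divmod r (pat (i.val / r)) (i.val % r) hr hmod).1
    have hm := (dstr_divmod r (pat (i.val / r)) (i.val % r) hr hmod).2
    exact ⟨by rw [← h, hd], by rw [← h, hm]⟩
  · rintro ⟨h1, h2⟩
    rw [h1, h2]; exact Nat.div_add_mod' _ _

lemma part1 (r : ℕ) (hr : 0 < r) :
    IsDoubleString (4 * r)
      (fun p => ⟨((![0, 1, 2, 3, 0, 2, 1, 3] : Fin 8 → ℕ)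
          ⟨p.val / r % 8, Nat.mod_lt _ (by decide)⟩ * r + p.val % r) % (4 * r),
        Nat.mod_lt _ (Nat.mul_pos (by decide) hr)⟩) := by
  intro a
  have hq : a.val / r < 4 := Nat.div_lt_of_lt_mul (by have := a.isLt; omega)
  have hm : a.val % r < r := Nat.mod_lt _ hr
  obtain ⟨β1, β2, h12, hβ2, hp1, hp2, huniq⟩ := pat_blocks (a.val / r) hq
  have hb1 : β1 * r + a.val % r < 2 * (4 * r) := by
    have : β1 * r ≤ 7 * r := Nat.mul_le_mul_right r (by omega); omega
  have hb2 : β2 * r + a.val % r < 2 * (4 * r) := by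
    have : β2 * r ≤ 7 * r := Nat.mul_le_mul_right r (by omega); omega
  apply Finset.card_eq_two.mpr
  refine ⟨⟨β1 * r + a.val % r, hb1⟩, ⟨β2 * r + a.val % r, hb2⟩, ?_, ?_⟩
  · have : β1 * r < β2 * r := Nat.mul_lt_mul_of_pos_right h12 hr
    exact fun h => by have := Fin.mk.injEq .. ▸ h; simp at this; omega
  · ext i
    simp only [Finset.mem_filter, Finset.mem_univ, true_and, Finset.mem_insert,
      Finset.mem_singleton]
    rw [mem_char r hr i a]
    constructor
    · rintro ⟨hpa, hma⟩
      have h8 : i.val / r < 8 := Nat.div_lt_of_lt_mul (by have := i.isLt; omega)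
      have hd := Nat.div_add_mod' i.val r
      rcases huniq _ h8 hpa with h | h
      · left; apply Fin.ext; simp only [Fin.val_mk]; rw [h] at hd; omega
      · right; apply Fin.ext; simp only [Fin.val_mk]; rw [h] at hd; omega
    · rintro (h | h) <;> subst h <;>
        simp only [Fin.val_mk] <;>
        exact ⟨by rw [(dstr_divmod r _ _ hr hm).1]; assumption,
               (dstr_divmod r _ _ hr hm).2⟩

lemma part2 (r : ℕ) (hr : 0 < r) :
    DiamLE (4 * r) (2 * r - 1)
      (fun p => ⟨((![0, 1, 2, 3, 0, 2, 1, 3] : Fin 8 → ℕ)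
          ⟨p.val / r % 8, Nat.mod_lt _ (by decide)⟩ * r + p.val % r) % (4 * r),
        Nat.mod_lt _ (Nat.mul_pos (by decide) hr)⟩) := by
  intro a b hab
  have hqa : a.val / r < 4 := Nat.div_lt_of_lt_mul (by have := a.isLt; omega)
  have hqb : b.val / r < 4 := Nat.div_lt_of_lt_mul (by have := b.isLt; omega)
  have hma : a.val % r < r := Nat.mod_lt _ hr
  have hmb : b.val % r < r := Nat.mod_lt _ hr
  obtain ⟨βa, hβa, βb, hβb, hpa, hpb, hrel⟩ := pat_adj (a.val / r) hqa (b.val / r) hqb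
  have hia : βa * r + a.val % r < 2 * (4 * r) := by
    have : βa * r ≤ 7 * r := Nat.mul_le_mul_right r (by omega); omega
  have hib : βb * r + b.val % r < 2 * (4 * r) := by
    have : βb * r ≤ 7 * r := Nat.mul_le_mul_right r (by omega); omega
  refine ⟨⟨βa * r + a.val % r, hia⟩, ⟨βb * r + b.val % r, hib⟩, ?_, ?_, ?_⟩
  · rw [mem_char r hr]
    exact ⟨by rw [(dstr_divmod r _ _ hr hma).1]; exact hpa, (dstr_divmod r _ _ hr hma).2⟩
  · rw [mem_char r hr]
    exact ⟨by rw [(dstr_divmod r _ _ hr hmb).1]; exact hpb, (dstr_divmod r _ _ hr hmb).2⟩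
  · show Nat.dist (βa * r + a.val % r) (βb * r + b.val % r) ≤ 2 * r - 1
    simp only [Nat.dist]
    rcases hrel with h | h | h
    · subst h; omega
    · have : (βa + 1) * r = βa * r + r := by ring
      rw [← h, this]; omega
    · have : (βb + 1) * r = βb * r + r := by ring
      rw [← h, this]; omega

lemma part3 (r : ℕ) (hr : 0 < r) (d : ℕ)
    (h : DiamLE (4 * r) d
      (fun p => ⟨((![0, 1, 2, 3, 0, 2, 1, 3] : Fin 8 → ℕ)
          ⟨p.val / r % 8, Nat.mod_lt _ (by decide)⟩ * r + p.val % r) % (4 * r),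
        Nat.mod_lt _ (Nat.mul_pos (by decide) hr)⟩)) : 2 * r - 1 ≤ d := by
  obtain ⟨i, j, hi, hj, hd⟩ := h ⟨0, by omega⟩ ⟨2 * r - 1, by omega⟩
    (by intro hc; have := Fin.val_eq_of_eq hc; simp at this; omega)
  rw [mem_char r hr] at hi hj
  simp only [Fin.val_mk] at hi hj
  have e1 : (2 * r - 1) / r = 1 := by
    have : 2 * r - 1 = 1 * r + (r - 1) := by omega
    rw [this]; exact (dstr_divmod r 1 (r - 1) hr (by omega)).1
  have e2 : (2 * r - 1) % r = r - 1 := by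
    have : 2 * r - 1 = 1 * r + (r - 1) := by omega
    rw [this]; exact (dstr_divmod r 1 (r - 1) hr (by omega)).2
  rw [Nat.zero_div, Nat.zero_mod] at hi
  rw [e1, e2] at hj
  have hi8 : i.val / r < 8 := Nat.div_lt_of_lt_mul (by have := i.isLt; omega)
  have hj8 : j.val / r < 8 := Nat.div_lt_of_lt_mul (by have := j.isLt; omega)
  have ui : ∀ β < 8, pat β = 0 → β = 0 ∨ β = 4 := by decide
  have uj : ∀ β < 8, pat β = 1 → β = 1 ∨ β = 6 := by decide
  have hdi := Nat.div_add_mod' i.val r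
  have hdj := Nat.div_add_mod' j.val r
  have hiv : i.val = 0 ∨ i.val = 4 * r := by
    rcases ui _ hi8 hi.1 with h | h <;> rw [h] at hdi <;> omega
  have hjv : j.val = 2 * r - 1 ∨ j.val = 7 * r - 1 := by
    rcases uj _ hj8 hj.1 with h | h <;> rw [h] at hdj <;> omega
  simp only [Nat.dist] at hd
  omega


/-- For `n = 4r`, the double-`n` string `S₁S₂S₃S₄S₁S₃S₂S₄`, where `Sᵢ` is the
block `(i-1)r+1, …, ir`, has diameter exactly `2r - 1`; in particular
`δ(4r) ≤ 2r - 1`.  (Position `p` holds the symbol `b·r + (p mod r)` where `b`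
is the `(p div r)`-th entry of the block pattern `0,1,2,3,0,2,1,3`; the `% (4*r)`
is the identity on these values and only serves to provide the `Fin` bound.) -/
theorem delta_four_r (r : ℕ) (hr : 0 < r) :
    IsDoubleString (4 * r)
      (fun p => ⟨((![0, 1, 2, 3, 0, 2, 1, 3] : Fin 8 → ℕ)
          ⟨p.val / r % 8, Nat.mod_lt _ (by omega)⟩ * r + p.val % r) % (4 * r),
        Nat.mod_lt _ (by omega)⟩) ∧
    DiamLE (4 * r) (2 * r - 1)
      (fun p => ⟨((![0, 1, 2, 3, 0, 2, 1, 3] : Fin 8 → ℕ)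
          ⟨p.val / r % 8, Nat.mod_lt _ (by omega)⟩ * r + p.val % r) % (4 * r),
        Nat.mod_lt _ (by omega)⟩) ∧
    (∀ d : ℕ, DiamLE (4 * r) d
      (fun p => ⟨((![0, 1, 2, 3, 0, 2, 1, 3] : Fin 8 → ℕ)
          ⟨p.val / r % 8, Nat.mod_lt _ (by omega)⟩ * r + p.val % r) % (4 * r),
        Nat.mod_lt _ (by omega)⟩) → 2 * r - 1 ≤ d) ∧
    delta (4 * r) ≤ 2 * r - 1 := by
    exact ⟨part1 r hr, part2 r hr, fun d h => part3 r hr d h,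
    Nat.sInf_le ⟨_, part1 r hr, part2 r hr⟩⟩
end

section
/- In any double-n string of diameter d with d < n, the first occurrence of a symbol at any position i ≤ n - d is not preceded by any repeated symbol; equivalently, the first n - d entries of the string are pairwise distinct symbols. -/
/-- In any double-`n` string of diameter `d` with `d < n`, the first `n - d`
entries are pairwise distinct symbols. -/
theorem first_entries_distinct (n d : ℕ) (s : Fin (2 * n) → Fin n)
    (hs : IsDoubleString n s) (hd : DiamLE n d s) (hdn : d < n)
    (i j : Fin (2 * n)) (hi : i.val < n - d) (hj : j.val < n - d)
    (hij : i ≠ j) : s i ≠ s j := by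
  intro heq
  set a := s i with ha
  -- the fiber of a is exactly {i, j}
  have hij_sub : ({i, j} : Finset (Fin (2*n))) ⊆
      Finset.univ.filter (fun p => s p = a) := by
    intro p hp
    simp only [Finset.mem_insert, Finset.mem_singleton] at hp
    rcases hp with rfl | rfl
    · simp [ha]
    · simp [heq.symm]
  have hset : Finset.univ.filter (fun p => s p = a) = {i, j} :=
    (Finset.eq_of_subset_of_card_le hij_sub
      (by rw [hs a, Finset.card_pair hij])).symm
  -- positions < n
  set T : Finset (Fin (2*n)) := Finset.univ.filter (fun p => p.val < n) with hTdef
  have hn2 : n ≤ 2 * n := by omega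
  have hT : T.card = n := by
    have himg : T = (Finset.univ : Finset (Fin n)).image (Fin.castLE hn2) := by
      ext p
      simp only [hTdef, Finset.mem_filter, Finset.mem_univ, true_and,
        Finset.mem_image]
      constructor
      · intro hp
        exact ⟨⟨p.val, hp⟩, rfl⟩
      · rintro ⟨q, rfl⟩
        exact q.isLt
    rw [himg, Finset.card_image_of_injective _ (Fin.castLE_injective hn2),
      Finset.card_univ, Fintype.card_fin]
  have hTsum : T.card = ∑ b : Fin n, (T.filter (fun p => s p = b)).card :=
    Finset.card_eq_sum_card_fiberwise (fun x _ => Finset.mem_univ (s x))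
  have hiT : i ∈ T := by
    simp only [hTdef, Finset.mem_filter, Finset.mem_univ, true_and]; omega
  have hjT : j ∈ T := by
    simp only [hTdef, Finset.mem_filter, Finset.mem_univ, true_and]; omega
  have hbound : ∀ b : Fin n, (1 + if b = a then 1 else 0) ≤
      (T.filter (fun p => s p = b)).card := by
    intro b
    by_cases hba : b = a
    · simp only [if_pos hba]
      rw [hba]
      have hpair : ({i, j} : Finset (Fin (2*n))) ⊆ T.filter (fun p => s p = a) := by
        intro p hp
        simp only [Finset.mem_insert, Finset.mem_singleton] at hp
        rcases hp with rfl | rfl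
        · exact Finset.mem_filter.mpr ⟨hiT, ha.symm⟩
        · exact Finset.mem_filter.mpr ⟨hjT, heq.symm⟩
      
      calc (1 + 1 : ℕ) = ({i, j} : Finset (Fin (2*n))).card :=
            (Finset.card_pair hij).symm
        _ ≤ _ := Finset.card_le_card hpair
    · simp only [if_neg hba, add_zero]
      obtain ⟨i', j', hi', hj', hdist⟩ := hd a b (fun h => hba h.symm)
      have hi'mem : i' ∈ Finset.univ.filter (fun p => s p = a) := by
        simp [hi']
      rw [hset] at hi'mem
      simp only [Finset.mem_insert, Finset.mem_singleton] at hi'mem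
      have hi'lt : i'.val < n - d := by rcases hi'mem with rfl | rfl <;> omega
      have hj'lt : j'.val < n := by
        simp only [Nat.dist] at hdist
        omega
      have : j' ∈ T.filter (fun p => s p = b) := by
        refine Finset.mem_filter.mpr ⟨?_, hj'⟩
        simp only [hTdef, Finset.mem_filter, Finset.mem_univ, true_and]
        exact hj'lt
      exact Finset.card_pos.mpr ⟨j', this⟩
  have hsum : n + 1 ≤ ∑ b : Fin n, (T.filter (fun p => s p = b)).card := by
    calc n + 1 = ∑ b : Fin n, (1 + if b = a then 1 else 0) := by
          rw [Finset.sum_add_distrib]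
          simp [Finset.sum_ite_eq']
      _ ≤ _ := Finset.sum_le_sum (fun b _ => hbound b)
  omega
end

section
/- Let S be a double-n string with diameter d where d < n/2. For 1 ≤ i ≤ d+1, let r_i be the number of symbols j ≠ i such that both occurrences of j are within distance d of some occurrence of i. Then r_i ≤ 3d + i - n. -/
/-- The position of the first occurrence of the symbol `a` in `s`. -/
noncomputable def firstOcc (n : ℕ) (s : Fin (2 * n) → Fin n) (a : Fin n) : ℕ :=
  sInf {i | ∃ h : i < 2 * n, s ⟨i, h⟩ = a}

open Finset

/-- Counting lemma: if every symbol has an occurrence in `T` and all occurrences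
of each symbol in `E` lie in `T`, then `n + E.card ≤ T.card`. -/
lemma count_aux {n : ℕ} (s : Fin (2 * n) → Fin n) (hs : IsDoubleString n s)
    (T : Finset (Fin (2 * n))) (E : Finset (Fin n))
    (h1 : ∀ a : Fin n, ∃ q ∈ T, s q = a)
    (h2 : ∀ a ∈ E, (Finset.univ.filter (fun q => s q = a)) ⊆ T) :
    n + E.card ≤ T.card := by
  classical
  have key : T.card = ∑ a : Fin n, (T.filter (fun q => s q = a)).card :=
    Finset.card_eq_sum_card_fiberwise (fun q _ => Finset.mem_univ (s q))
  have hge : ∀ a : Fin n,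
      1 + (if a ∈ E then 1 else 0) ≤ (T.filter (fun q => s q = a)).card := by
    intro a
    by_cases ha : a ∈ E
    · simp only [ha, if_true]
      have hsub : (Finset.univ.filter (fun q => s q = a)) ⊆ T.filter (fun q => s q = a) := by
        intro q hq
        simp only [Finset.mem_filter, Finset.mem_univ, true_and] at hq
        exact Finset.mem_filter.mpr ⟨h2 a ha (by simp [hq]), hq⟩
      calc (1 + 1 : ℕ) = (Finset.univ.filter (fun q => s q = a)).card := (hs a).symm
        _ ≤ _ := Finset.card_le_card hsub
    · simp only [ha, if_false]
      obtain ⟨q, hqT, hqa⟩ := h1 a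
      have : q ∈ T.filter (fun q => s q = a) := Finset.mem_filter.mpr ⟨hqT, hqa⟩
      have := Finset.card_pos.mpr ⟨q, this⟩
      omega
  have hsum : ∑ a : Fin n, (1 + (if a ∈ E then 1 else 0))
      ≤ ∑ a : Fin n, (T.filter (fun q => s q = a)).card :=
    Finset.sum_le_sum (fun a _ => hge a)
  have hlhs : ∑ a : Fin n, (1 + (if a ∈ E then 1 else 0)) = n + E.card := by
    rw [Finset.sum_add_distrib]
    simp
  omega

/-- The ball of radius `d` around position `c` has at most `c+d+1 - (c-d)` elements. -/
lemma ball_card {n d : ℕ} (c : ℕ) :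
    ((Finset.univ : Finset (Fin (2 * n))).filter (fun q => Nat.dist q.val c ≤ d)).card
      ≤ (c + d + 1) - (c - d) := by
  classical
  have h : ((Finset.univ : Finset (Fin (2 * n))).filter (fun q => Nat.dist q.val c ≤ d)).card
      ≤ (Finset.Icc (c - d) (c + d)).card := by
    apply Finset.card_le_card_of_injOn (fun q => q.val)
    · intro q hq
      simp only [Finset.mem_coe, Finset.mem_filter, Finset.mem_univ, true_and] at hq
      simp only [Nat.dist] at hq
      simp only [Finset.mem_coe, Finset.mem_Icc]
      omega
    · intro a _ b _ hab
      exact Fin.ext hab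
  rwa [Nat.card_Icc] at h

lemma val_le_firstOcc {n : ℕ} (s : Fin (2 * n) → Fin n)
    (horder : ∀ a b : Fin n, a < b → firstOcc n s a < firstOcc n s b) (a : Fin n) :
    a.val ≤ firstOcc n s a := by
  obtain ⟨m, hm⟩ : ∃ m, a.val = m := ⟨a.val, rfl⟩
  induction m generalizing a with
  | zero => omega
  | succ k ih =>
    have hk : k < n := by omega
    have hb := horder ⟨k, hk⟩ a (by simp [Fin.lt_def]; omega)
    have h3 := ih ⟨k, hk⟩ rfl
    simp only [Fin.val_mk] at h3
    omega

lemma firstOcc_le {n : ℕ} (s : Fin (2 * n) → Fin n) (p : Fin (2 * n)) :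
    firstOcc n s (s p) ≤ p.val :=
  Nat.sInf_le ⟨p.isLt, by simp⟩

/-- Distinctness: positions `≤ d` carry distinct symbols. -/
lemma inj_low {n d : ℕ} (s : Fin (2 * n) → Fin n) (hs : IsDoubleString n s)
    (hd : DiamLE n d s) (hdn : 2 * d < n) :
    ∀ p q : Fin (2 * n), p.val ≤ d → q.val ≤ d → s p = s q → p = q := by
  classical
  intro p q hp hq hpq
  by_contra hne
  set a := s p with ha
  have hocc : ({p, q} : Finset (Fin (2 * n))) = Finset.univ.filter (fun r => s r = a) := by
    apply Finset.eq_of_subset_of_card_le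
    · intro r hr
      simp only [Finset.mem_insert, Finset.mem_singleton] at hr
      rcases hr with rfl | rfl
      · simp [ha]
      · simp [Finset.mem_filter, ← hpq, ha]
    · rw [hs a, Finset.card_pair hne]
  set T : Finset (Fin (2 * n)) := Finset.univ.filter (fun r => r.val ≤ 2 * d) with hT
  have h1 : ∀ b : Fin n, ∃ r ∈ T, s r = b := by
    intro b
    by_cases hba : b = a
    · exact ⟨p, by simp [hT]; omega, hba ▸ ha.symm⟩
    · obtain ⟨u, v, hu, hv, huv⟩ := hd b a hba
      have hvmem : v ∈ ({p, q} : Finset (Fin (2 * n))) := by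
        rw [hocc]; simp [hv]
      have hvd : v.val ≤ d := by
        simp only [Finset.mem_insert, Finset.mem_singleton] at hvmem
        rcases hvmem with rfl | rfl <;> assumption
      refine ⟨u, ?_, hu⟩
      simp only [hT, Finset.mem_filter, Finset.mem_univ, true_and]
      simp only [Nat.dist] at huv
      omega
  have h2 : ∀ b ∈ ({a} : Finset (Fin n)), (Finset.univ.filter (fun r => s r = b)) ⊆ T := by
    intro b hb
    simp only [Finset.mem_singleton] at hb
    subst hb
    rw [← hocc]
    intro r hr
    simp only [Finset.mem_insert, Finset.mem_singleton] at hr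
    simp only [hT, Finset.mem_filter, Finset.mem_univ, true_and]
    rcases hr with rfl | rfl <;> omega
  have hcount := count_aux s hs T {a} h1 h2
  have hTcard : T.card ≤ 2 * d + 1 := by
    have : T.card ≤ (Finset.range (2 * d + 1)).card := by
      apply Finset.card_le_card_of_injOn (fun r => r.val)
      · intro r hr
        simp only [hT, Finset.mem_coe, Finset.mem_filter, Finset.mem_univ, true_and] at hr
        simp only [Finset.mem_coe, Finset.mem_range]
        omega
      · intro x _ y _ hxy
        exact Fin.ext hxy
    simpa using this
  simp only [Finset.card_singleton] at hcount
  omega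

lemma s_diag {n d : ℕ} (s : Fin (2 * n) → Fin n) (hs : IsDoubleString n s)
    (hd : DiamLE n d s) (hdn : 2 * d < n)
    (horder : ∀ a b : Fin n, a < b → firstOcc n s a < firstOcc n s b) :
    ∀ k (hk2 : k < 2 * n), k ≤ d → (s ⟨k, hk2⟩).val = k := by
  intro k
  induction k using Nat.strong_induction_on with
  | _ k ih =>
    intro hk2 hkd
    have h1 : (s ⟨k, hk2⟩).val ≤ k := by
      have ha := val_le_firstOcc s horder (s ⟨k, hk2⟩)
      have hb := firstOcc_le s ⟨k, hk2⟩
      simp only [Fin.val_mk] at hb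
      omega
    rcases Nat.lt_or_ge (s ⟨k, hk2⟩).val k with hlt | hge
    · exfalso
      set m := (s ⟨k, hk2⟩).val with hm
      have hm2 : m < 2 * n := by omega
      have heq : s ⟨m, hm2⟩ = s ⟨k, hk2⟩ := by
        apply Fin.ext
        rw [ih m hlt hm2 (by omega)]
      have := inj_low s hs hd hdn ⟨m, hm2⟩ ⟨k, hk2⟩ (by simp; omega) (by simpa) heq
      simp only [Fin.mk.injEq] at this
      omega
    · omega

/-- Lemma 4 of the paper.  Let `S` be a double-`n` string with diameter `d`,
`d < n/2`, whose symbols are labeled by order of first occurrence.  For a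
symbol `i` among the first `d+1` (i.e. with 1-based label `i.val + 1 ≤ d + 1`),
let `rᵢ` be the number of symbols `j ≠ i` both of whose occurrences are within
distance `d` of some occurrence of `i`.  Then `rᵢ ≤ 3d + (i.val + 1) - n`,
stated without natural subtraction as `rᵢ + n ≤ 3d + i.val + 1`. -/
theorem repeats_bound (n d : ℕ) (s : Fin (2 * n) → Fin n)
    (hs : IsDoubleString n s) (hd : DiamLE n d s) (hdn : 2 * d < n)
    (horder : ∀ a b : Fin n, a < b → firstOcc n s a < firstOcc n s b)
    (i : Fin n) (hi : i.val ≤ d) :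
    Nat.card {j : Fin n // j ≠ i ∧ ∀ p : Fin (2 * n), s p = j →
        ∃ q : Fin (2 * n), s q = i ∧ Nat.dist p.val q.val ≤ d} + n
      ≤ 3 * d + i.val + 1 := by
  classical
  set R : Finset (Fin n) := Finset.univ.filter (fun j => j ≠ i ∧ ∀ p : Fin (2 * n), s p = j →
      ∃ q : Fin (2 * n), s q = i ∧ Nat.dist p.val q.val ≤ d) with hR
  have hcard : Nat.card {j : Fin n // j ≠ i ∧ ∀ p : Fin (2 * n), s p = j →
      ∃ q : Fin (2 * n), s q = i ∧ Nat.dist p.val q.val ≤ d} = R.card := by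
    rw [Nat.card_eq_fintype_card, Fintype.card_subtype]
  rw [hcard]
  have hi2n : i.val < 2 * n := by omega
  have hsi : s ⟨i.val, hi2n⟩ = i :=
    Fin.ext (s_diag s hs hd hdn horder i.val hi2n hi)
  -- the two occurrences of i
  obtain ⟨x, y, hxy, hocc⟩ := Finset.card_eq_two.mp (hs i)
  have hiocc : (⟨i.val, hi2n⟩ : Fin (2 * n)) ∈ Finset.univ.filter (fun r => s r = i) := by
    simp [hsi]
  rw [hocc] at hiocc
  simp only [Finset.mem_insert, Finset.mem_singleton] at hiocc
  obtain ⟨q2, hocc2⟩ : ∃ q2 : Fin (2 * n),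
      Finset.univ.filter (fun r => s r = i) = {⟨i.val, hi2n⟩, q2} := by
    rcases hiocc with h | h
    · exact ⟨y, by rw [hocc, h]⟩
    · exact ⟨x, by rw [hocc, h, Finset.pair_comm]⟩
  set P : Finset (Fin (2 * n)) := Finset.univ.filter
      (fun q => ∃ q' : Fin (2 * n), s q' = i ∧ Nat.dist q.val q'.val ≤ d) with hP
  -- lower bound on P.card
  have hiR : i ∉ R := by simp [hR]
  have h1 : ∀ a : Fin n, ∃ q ∈ P, s q = a := by
    intro a
    by_cases hai : a = i
    · refine ⟨⟨i.val, hi2n⟩, ?_, hai ▸ hsi⟩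
      simp only [hP, Finset.mem_filter, Finset.mem_univ, true_and]
      exact ⟨⟨i.val, hi2n⟩, hsi, by simp [Nat.dist]⟩
    · obtain ⟨u, v, hu, hv, huv⟩ := hd a i hai
      refine ⟨u, ?_, hu⟩
      simp only [hP, Finset.mem_filter, Finset.mem_univ, true_and]
      exact ⟨v, hv, huv⟩
  have h2 : ∀ a ∈ insert i R, (Finset.univ.filter (fun q => s q = a)) ⊆ P := by
    intro a ha q hq
    simp only [Finset.mem_filter, Finset.mem_univ, true_and] at hq
    simp only [hP, Finset.mem_filter, Finset.mem_univ, true_and]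
    rcases Finset.mem_insert.mp ha with rfl | haR
    · exact ⟨q, hq, by simp [Nat.dist]⟩
    · simp only [hR, Finset.mem_filter, Finset.mem_univ, true_and] at haR
      exact haR.2 q hq
  have hlow := count_aux s hs P (insert i R) h1 h2
  rw [Finset.card_insert_of_notMem hiR] at hlow
  -- upper bound on P.card
  have hPsub : P ⊆ (Finset.univ.filter (fun q : Fin (2 * n) => Nat.dist q.val i.val ≤ d))
      ∪ (Finset.univ.filter (fun q : Fin (2 * n) => Nat.dist q.val q2.val ≤ d)) := by
    intro q hq
    simp only [hP, Finset.mem_filter, Finset.mem_univ, true_and] at hq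
    obtain ⟨q', hq', hqd⟩ := hq
    have : q' ∈ ({⟨i.val, hi2n⟩, q2} : Finset (Fin (2 * n))) := by
      rw [← hocc2]; simp [hq']
    simp only [Finset.mem_insert, Finset.mem_singleton] at this
    rcases this with rfl | rfl
    · exact Finset.mem_union_left _ (by simp [hqd])
    · exact Finset.mem_union_right _ (by simp [hqd])
  have hup : P.card ≤ (i.val + d + 1) + (2 * d + 1) := by
    have hb1 := ball_card (n := n) (d := d) i.val
    have hb2 := ball_card (n := n) (d := d) q2.val
    have := Finset.card_le_card hPsub
    have := Finset.card_union_le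
      (Finset.univ.filter (fun q : Fin (2 * n) => Nat.dist q.val i.val ≤ d))
      (Finset.univ.filter (fun q : Fin (2 * n) => Nat.dist q.val q2.val ≤ d))
    omega
  omega
end

section
/- For every positive integer n, there exists a double-n string with diameter at most 5⌈n/13⌉ - 1; consequently δ(n) ≤ 5⌈n/13⌉ - 1. -/
namespace DeltaUB

/-- base double-13 string of diameter 4 (0-indexed symbols). -/
def B : List ℕ := [0,1,2,3,4,5,6,7,8,9,0,10,5,11,12,4,3,6,10,9,8,1,2,12,11,7]

def m (n k c : ℕ) : ℕ := min k (n - k * c)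

def blk (n k c : ℕ) : List ℕ := (List.range (m n k c)).map (fun r => k * c + r)

def L (n k : ℕ) : List ℕ := B.flatMap (blk n k)

theorem hB2 : ∀ t < 13, B.count t = 2 := by decide

theorem hBd : ∀ a < 13, ∀ b < 13, ∃ p < 26, ∃ q < 26,
    B.getD p 0 = a ∧ B.getD q 0 = b ∧ p - q ≤ 4 ∧ q - p ≤ 4 := by decide

theorem length_blk (n k c : ℕ) : (blk n k c).length = m n k c := by
  simp [blk]

theorem sum_ind {α} (l : List α) (p : α → Prop) [DecidablePred p] :
    (l.map (fun x => if p x then 1 else 0)).sum = l.countP (fun x => decide (p x)) := by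
  induction l with
  | nil => simp
  | cons h t ih => by_cases hp : p h <;> simp [List.countP_cons, hp, ih] <;> omega

theorem card_filter_get {α} [DecidableEq α] (l : List α) (a : α) :
    (Finset.univ.filter (fun i : Fin l.length => l.get i = a)).card = l.count a := by
  conv_rhs => rw [← List.map_get_finRange l]
  rw [List.count, List.countP_map, Finset.card_filter, Fin.sum_univ_def, sum_ind]
  rfl

theorem card_filter_get' {α} [DecidableEq α] (l : List α) {N : ℕ} (h : l.length = N) (a : α) :
    (Finset.univ.filter (fun i : Fin N => l.get (Fin.cast h.symm i) = a)).card = l.count a := by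
  subst h
  simpa using card_filter_get l a

theorem count_flatMap_eq (l : List ℕ) (f : ℕ → List ℕ) (x t : ℕ)
    (h : ∀ c ∈ l, (f c).count x = if c = t then 1 else 0) :
    (l.flatMap f).count x = l.count t := by
  induction l with
  | nil => simp
  | cons c tl ih =>
    rw [List.flatMap_cons, List.count_append, h c (by simp), ih (fun c hc => h c (by simp [hc])),
      List.count_cons]
    by_cases hc : c = t <;> simp [hc] <;> omega

theorem count_blk (n k c x : ℕ) (hk : 0 < k) (hx : x < n) :
    (blk n k c).count x = if c = x / k then 1 else 0 := by
  have hnd : (blk n k c).Nodup := by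
    apply List.Nodup.map _ List.nodup_range
    intro a b hab
    simpa using hab
  have hmem : x ∈ blk n k c ↔ ∃ r < m n k c, k * c + r = x := by
    simp [blk]
  by_cases hc : c = x / k
  · subst hc
    have hdm := Nat.div_add_mod x k
    have hmm : x % k < m n k (x / k) := by
      have h1 : x % k < k := Nat.mod_lt _ hk
      simp only [m]
      omega
    rw [if_pos rfl]
    exact List.count_eq_one_of_mem hnd (hmem.mpr ⟨x % k, hmm, by omega⟩)
  · rw [if_neg hc]
    apply List.count_eq_zero_of_not_mem
    rw [hmem]
    rintro ⟨r, hr, hrx⟩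
    have hrk : r < k := by have : m n k c ≤ k := Nat.min_le_left _ _; omega
    apply hc
    rw [← hrx, Nat.mul_add_div hk, Nat.div_eq_of_lt hrk]
    omega

theorem count_L (n k x : ℕ) (hk : 0 < k) (hx : x < n) (hn13 : n ≤ 13 * k) :
    (L n k).count x = 2 := by
  rw [L, count_flatMap_eq _ _ x (x / k) (fun c _ => count_blk n k c x hk hx)]
  have h13 : x / k < 13 := Nat.div_lt_of_lt_mul (by omega)
  exact hB2 _ h13

theorem sum_B (f : ℕ → ℕ) : (B.map f).sum = 2 * ∑ c ∈ Finset.range 13, f c := by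
  simp only [B, List.map_cons, List.map_nil, List.sum_cons, List.sum_nil, Finset.sum_range_succ,
    Finset.sum_range_zero]
  omega

theorem sum_m (n k N : ℕ) : (∑ c ∈ Finset.range N, m n k c) = min (k * N) n := by
  induction N with
  | zero => simp
  | succ N ih =>
    rw [Finset.sum_range_succ, ih, Nat.mul_succ]
    unfold m
    generalize k * N = t
    omega

theorem length_L (n k : ℕ) (hn13 : n ≤ 13 * k) : (L n k).length = 2 * n := by
  rw [L, List.length_flatMap]
  have hmap : B.map (fun a => (blk n k a).length) = B.map (m n k) := by
    simp [Function.comp, length_blk]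
  rw [hmap, sum_B, sum_m]
  omega

theorem mem_L_lt (n k x : ℕ) (hx : x ∈ L n k) : x < n := by
  simp only [L, List.mem_flatMap, blk, List.mem_map, List.mem_range, m] at hx
  obtain ⟨c, -, r, hr, rfl⟩ := hx
  omega

/-- splitting the flatMap at position `p`. -/
theorem flatMap_split (l : List ℕ) (f : ℕ → List ℕ) (p : ℕ) (hp : p < l.length) :
    l.flatMap f = (l.take p).flatMap f ++ (f l[p] ++ (l.drop (p + 1)).flatMap f) := by
  conv_lhs => rw [← List.take_append_drop p l, List.drop_eq_getElem_cons hp]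
  rw [List.flatMap_append, List.flatMap_cons]

def off (n k p : ℕ) : ℕ := ((B.take p).flatMap (blk n k)).length

theorem get_L (n k p x : ℕ) (hk : 0 < k) (hp : p < 26) (hx : x < n)
    (hc : B[p]'(by simp [B]; omega) = x / k) :
    ∃ h : off n k p + x % k < (L n k).length,
      (L n k)[off n k p + x % k]'h = x := by
  have hpl : p < B.length := by simp [B]; omega
  have hdm := Nat.div_add_mod x k
  have hmm : x % k < (blk n k (B[p]'hpl)).length := by
    rw [length_blk, hc]
    have h1 : x % k < k := Nat.mod_lt _ hk
    simp only [m]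
    omega
  have hsplit := flatMap_split B (blk n k) p hpl
  have hlt : off n k p + x % k < (L n k).length := by
    rw [L, hsplit]
    simp only [List.length_append, off]
    omega
  refine ⟨hlt, ?_⟩
  have hsplit' : L n k = (B.take p).flatMap (blk n k) ++
      (blk n k (B[p]'hpl) ++ (B.drop (p + 1)).flatMap (blk n k)) := hsplit
  have h1 : (L n k)[off n k p + x % k]'hlt =
      ((blk n k (B[p]'hpl) ++ (B.drop (p+1)).flatMap (blk n k)))[x % k]'(by
        simp only [List.length_append]; omega) := by
    rw [List.getElem_of_eq hsplit' hlt]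
    rw [List.getElem_append_right (by simp [off])]
    congr 1
    simp [off]
  rw [h1, List.getElem_append_left hmm]
  simp only [blk, List.getElem_map, List.getElem_range, hc]
  omega

theorem flatMap_len_le (l : List ℕ) (f : ℕ → List ℕ) (k : ℕ) (h : ∀ c, (f c).length ≤ k) :
    (l.flatMap f).length ≤ l.length * k := by
  induction l with
  | nil => simp
  | cons c tl ih =>
    rw [List.flatMap_cons, List.length_append]
    have := h c
    simp only [List.length_cons]
    have h2 : (tl.length + 1) * k = tl.length * k + k := by ring
    omega

theorem off_mono_le (n k p q : ℕ) (hk : 0 < k) (hpq : p ≤ q) :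
    off n k p ≤ off n k q ∧ off n k q ≤ off n k p + (q - p) * k := by
  have htake : B.take q = B.take p ++ (B.drop p).take (q - p) := by
    have hq : q = p + (q - p) := by omega
    conv_lhs => rw [hq, List.take_add]
  have hlen : ∀ c, (blk n k c).length ≤ k := by
    intro c; rw [length_blk]; exact Nat.min_le_left _ _
  have := flatMap_len_le ((B.drop p).take (q - p)) (blk n k) k hlen
  have hle : ((B.drop p).take (q - p)).length ≤ q - p := by
    simp
  unfold off
  rw [htake, List.flatMap_append, List.length_append]
  constructor
  · omega
  · have : (((B.drop p).take (q - p)).flatMap (blk n k)).length ≤ (q - p) * k := by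
      calc _ ≤ ((B.drop p).take (q - p)).length * k := this
        _ ≤ (q - p) * k := Nat.mul_le_mul_right k hle
    omega

end DeltaUB

open DeltaUB in
/-- For every positive integer `n` there exists a double-`n` string with
diameter at most `5⌈n/13⌉ - 1`; consequently `δ(n) ≤ 5⌈n/13⌉ - 1`.  (Here
`⌈n/13⌉ = (n + 12) / 13` in natural-number arithmetic.) -/
theorem delta_upper_bound (n : ℕ) (hn : 0 < n) :
    (∃ s : Fin (2 * n) → Fin n,
        IsDoubleString n s ∧ DiamLE n (5 * ((n + 12) / 13) - 1) s) ∧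
    delta n ≤ 5 * ((n + 12) / 13) - 1 := by
  set k := (n + 12) / 13 with hkdef
  have hk : 0 < k := by omega
  have hn13 : n ≤ 13 * k := by omega
  have hlen : (L n k).length = 2 * n := length_L n k hn13
  set s : Fin (2 * n) → Fin n :=
    fun i => ⟨(L n k).get (Fin.cast hlen.symm i) % n, Nat.mod_lt _ hn⟩ with hsdef
  have hsiff : ∀ (i : Fin (2 * n)) (a : Fin n),
      s i = a ↔ (L n k).get (Fin.cast hlen.symm i) = (a : ℕ) := by
    intro i a
    have hmem : (L n k).get (Fin.cast hlen.symm i) ∈ L n k := by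
      rw [List.get_eq_getElem]
      exact List.getElem_mem _
    have hlt : (L n k).get (Fin.cast hlen.symm i) < n := mem_L_lt n k _ hmem
    rw [Fin.ext_iff]
    simp only [hsdef]
    rw [Nat.mod_eq_of_lt hlt]
  have hds : IsDoubleString n s := by
    intro a
    rw [Finset.filter_congr (fun i _ => by rw [hsiff i a])]
    rw [card_filter_get' (L n k) hlen ((a : ℕ))]
    exact count_L n k a hk a.isLt hn13
  -- helper for the diameter bound, ordered version
  have key : ∀ p q : ℕ, p < 26 → q < 26 → p ≤ q → q - p ≤ 4 →
      ∀ x y : Fin n, B.getD p 0 = (x : ℕ) / k → B.getD q 0 = (y : ℕ) / k →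
      ∃ i j : Fin (2 * n), s i = x ∧ s j = y ∧ Nat.dist i.val j.val ≤ 5 * k - 1 := by
    intro p q hp hq hpq hd x y hcx hcy
    have hpl : p < B.length := by simp [B]; omega
    have hql : q < B.length := by simp [B]; omega
    rw [List.getD_eq_getElem B 0 hpl] at hcx
    rw [List.getD_eq_getElem B 0 hql] at hcy
    obtain ⟨hi, hgi⟩ := get_L n k p (x : ℕ) hk hp x.isLt hcx
    obtain ⟨hj, hgj⟩ := get_L n k q (y : ℕ) hk hq y.isLt hcy
    have hoff := off_mono_le n k p q hk hpq
    have hxk : (x : ℕ) % k < k := Nat.mod_lt _ hk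
    have hyk : (y : ℕ) % k < k := Nat.mod_lt _ hk
    refine ⟨⟨off n k p + (x : ℕ) % k, by omega⟩, ⟨off n k q + (y : ℕ) % k, by omega⟩, ?_, ?_, ?_⟩
    · rw [hsiff]
      simpa using hgi
    · rw [hsiff]
      simpa using hgj
    · simp only [Nat.dist]
      have h4 : off n k q ≤ off n k p + 4 * k := by
        have := hoff.2
        have : (q - p) * k ≤ 4 * k := Nat.mul_le_mul_right k hd
        omega
      have := hoff.1
      have := hoff.2
      have h4' : (q - p) * k ≤ 4 * k := Nat.mul_le_mul_right k hd
      omega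
  have hdiam : DiamLE n (5 * k - 1) s := by
    intro a b hab
    have hca : (a : ℕ) / k < 13 := Nat.div_lt_of_lt_mul (by omega)
    have hcb : (b : ℕ) / k < 13 := Nat.div_lt_of_lt_mul (by omega)
    obtain ⟨p, hp, q, hq, hpa, hqb, hd1, hd2⟩ := hBd _ hca _ hcb
    rcases le_total p q with hpq | hqp
    · exact key p q hp hq hpq hd2 a b hpa hqb
    · obtain ⟨i, j, hia, hjb, hij⟩ := key q p hq hp hqp hd1 b a hqb hpa
      exact ⟨j, i, hjb, hia, by rwa [Nat.dist_comm]⟩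
  exact ⟨⟨s, hds, hdiam⟩, Nat.sInf_le ⟨s, hds, hdiam⟩⟩
end

section
/- Let S be a pairwise-intersecting double-interval society with n voters and approval number a = a(S), with all interval endpoints distinct. Then (4n - a)(a - 1) ≥ n(n - 1). -/
/-- The approval set of voter `v`: the union of the voter's two closed
intervals `[A₁ v, B₁ v]` and `[A₂ v, B₂ v]`. -/
def approvalSet (A₁ B₁ A₂ B₂ : ℝ) : Set ℝ :=
  Set.Icc A₁ B₁ ∪ Set.Icc A₂ B₂

/-- Let `S` be a pairwise-intersecting double-interval society with `n` voters
(voter `v` approving the two disjoint closed intervals `[A₁ v, B₁ v]` and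
`[A₂ v, B₂ v]`), all `4n` endpoints distinct, with approval number `a`.
Then `(4n - a)(a - 1) ≥ n(n - 1)`. -/
theorem society_quadratic_bound (n a : ℕ)
    (A₁ B₁ A₂ B₂ : Fin n → ℝ)
    (h₁ : ∀ v, A₁ v ≤ B₁ v) (h₂ : ∀ v, B₁ v < A₂ v) (h₃ : ∀ v, A₂ v ≤ B₂ v)
    (hdistinct : Function.Injective (fun x : Fin n × Fin 4 =>
      if x.2 = 0 then A₁ x.1 else if x.2 = 1 then B₁ x.1
      else if x.2 = 2 then A₂ x.1 else B₂ x.1))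
    (hpair : ∀ u v : Fin n, ∃ p : ℝ,
      p ∈ approvalSet (A₁ u) (B₁ u) (A₂ u) (B₂ u) ∧
      p ∈ approvalSet (A₁ v) (B₁ v) (A₂ v) (B₂ v))
    (hub : ∀ p : ℝ,
      Nat.card {v : Fin n // p ∈ approvalSet (A₁ v) (B₁ v) (A₂ v) (B₂ v)} ≤ a)
    (hmax : ∃ p : ℝ,
      Nat.card {v : Fin n // p ∈ approvalSet (A₁ v) (B₁ v) (A₂ v) (B₂ v)} = a) :
    (4 * (n : ℤ) - a) * ((a : ℤ) - 1) ≥ (n : ℤ) * ((n : ℤ) - 1) := by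
  classical
  rcases Nat.eq_zero_or_pos n with hn | hn
  · subst hn
    obtain ⟨p, hp⟩ := hmax
    have hE : IsEmpty {v : Fin 0 // p ∈ approvalSet (A₁ v) (B₁ v) (A₂ v) (B₂ v)} :=
      ⟨fun x => x.1.elim0⟩
    have ha0 : a = 0 := by rw [← hp, Nat.card_of_isEmpty]
    subst ha0
    norm_num
  -- left endpoints indexed by Fin n × Bool
  set L : Fin n × Bool → ℝ := fun i => cond i.2 (A₂ i.1) (A₁ i.1) with hLdef
  set R : Fin n × Bool → ℝ := fun i => cond i.2 (B₂ i.1) (B₁ i.1) with hRdef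
  have hLR : ∀ i, L i ≤ R i := by
    rintro ⟨v, b⟩; cases b
    · exact h₁ v
    · exact h₃ v
  have hmem : ∀ i : Fin n × Bool, ∀ x : ℝ, x ∈ Set.Icc (L i) (R i) →
      x ∈ approvalSet (A₁ i.1) (B₁ i.1) (A₂ i.1) (B₂ i.1) := by
    rintro ⟨v, b⟩ x hx; cases b
    · exact Or.inl hx
    · exact Or.inr hx
  have happrox : ∀ v : Fin n, ∀ x : ℝ,
      x ∈ approvalSet (A₁ v) (B₁ v) (A₂ v) (B₂ v) →
      ∃ b : Bool, x ∈ Set.Icc (L (v, b)) (R (v, b)) := by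
    intro v x hx
    rcases hx with hx | hx
    · exact ⟨false, hx⟩
    · exact ⟨true, hx⟩
  -- injectivity of the left-endpoint assignment
  have hLinj : Function.Injective L := by
    rintro ⟨v, b⟩ ⟨w, c⟩ hvw
    have key : ((v, (if b then (2 : Fin 4) else 0)) : Fin n × Fin 4)
        = (w, (if c then (2 : Fin 4) else 0)) := by
      apply hdistinct
      show (if (if b then (2 : Fin 4) else 0) = 0 then A₁ v else _)
          = (if (if c then (2 : Fin 4) else 0) = 0 then A₁ w else _)
      cases b <;> cases c <;> simpa [hLdef] using hvw
    have h1 : v = w := congrArg Prod.fst key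
    have h2 : b = c := by
      have := congrArg Prod.snd key
      cases b <;> cases c <;> simp_all
    rw [h1, h2]
  have ha1 : 1 ≤ a := by
    have hmemself : A₁ ⟨0, hn⟩ ∈ approvalSet (A₁ ⟨0, hn⟩) (B₁ ⟨0, hn⟩) (A₂ ⟨0, hn⟩) (B₂ ⟨0, hn⟩) :=
      Or.inl ⟨le_rfl, h₁ _⟩
    have : Nonempty {v : Fin n // A₁ ⟨0, hn⟩ ∈ approvalSet (A₁ v) (B₁ v) (A₂ v) (B₂ v)} :=
      ⟨⟨⟨0, hn⟩, hmemself⟩⟩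
    have hpos : 0 < Nat.card {v : Fin n // A₁ ⟨0, hn⟩ ∈ approvalSet (A₁ v) (B₁ v) (A₂ v) (B₂ v)} :=
      Nat.card_pos
    have := hub (A₁ ⟨0, hn⟩)
    omega
  have han : a ≤ n := by
    obtain ⟨p, hp⟩ := hmax
    rw [← hp, Nat.card_eq_fintype_card]
    simpa using Fintype.card_subtype_le
      (fun v : Fin n => p ∈ approvalSet (A₁ v) (B₁ v) (A₂ v) (B₂ v))
  -- the other voters covering a left endpoint
  set S : Fin n × Bool → Finset (Fin n) := fun i =>
    Finset.univ.filter (fun u => u ≠ i.1 ∧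
      L i ∈ approvalSet (A₁ u) (B₁ u) (A₂ u) (B₂ u)) with hSdef
  have hselfL : ∀ i : Fin n × Bool,
      L i ∈ approvalSet (A₁ i.1) (B₁ i.1) (A₂ i.1) (B₂ i.1) :=
    fun i => hmem i (L i) ⟨le_rfl, hLR i⟩
  -- coverage bound: |S i| + 1 ≤ a
  have hcard1 : ∀ i : Fin n × Bool, (S i).card + 1 ≤ a := by
    intro i
    have hsub : insert i.1 (S i) ⊆ Finset.univ.filter
        (fun v => L i ∈ approvalSet (A₁ v) (B₁ v) (A₂ v) (B₂ v)) := by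
      intro u hu
      rcases Finset.mem_insert.mp hu with h | h
      · subst h; exact Finset.mem_filter.mpr ⟨Finset.mem_univ _, hselfL i⟩
      · rw [hSdef] at h
        simp only [Finset.mem_filter] at h
        exact Finset.mem_filter.mpr ⟨Finset.mem_univ _, h.2.2⟩
    have hni : i.1 ∉ S i := by
      rw [hSdef]; simp
    have hc := Finset.card_le_card hsub
    rw [Finset.card_insert_of_notMem hni] at hc
    have hfa : (Finset.univ.filter
        (fun v => L i ∈ approvalSet (A₁ v) (B₁ v) (A₂ v) (B₂ v))).card ≤ a := by
      have h := hub (L i)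
      rwa [Nat.card_eq_fintype_card, Fintype.card_subtype] at h
    omega
  -- rank of a left endpoint
  set rank : Fin n × Bool → ℕ := fun i =>
    (Finset.univ.filter (fun j => L j < L i)).card with hrankdef
  -- rank bound: any covering voter has an interval starting strictly earlier
  have hcard2 : ∀ i : Fin n × Bool, (S i).card ≤ rank i := by
    intro i
    apply Finset.card_le_card_of_injOn
      (fun u => if L i ∈ Set.Icc (A₁ u) (B₁ u) then (u, false) else (u, true))
    · intro u hu
      rw [hSdef] at hu
      replace hu := Finset.mem_filter.mp hu
      obtain ⟨-, hne, hm⟩ := hu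
      rw [Finset.mem_coe]; beta_reduce
      by_cases hcase : L i ∈ Set.Icc (A₁ u) (B₁ u)
      · rw [if_pos hcase]
        refine Finset.mem_filter.mpr ⟨Finset.mem_univ _, ?_⟩
        have hle : L (u, false) ≤ L i := hcase.1
        have hne' : L (u, false) ≠ L i := fun h => hne (congrArg Prod.fst (hLinj h))
        exact lt_of_le_of_ne hle hne'
      · rw [if_neg hcase]
        have hm2 : L i ∈ Set.Icc (A₂ u) (B₂ u) := by
          rcases hm with h | h
          · exact absurd h hcase
          · exact h
        refine Finset.mem_filter.mpr ⟨Finset.mem_univ _, ?_⟩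
        have hle : L (u, true) ≤ L i := hm2.1
        have hne' : L (u, true) ≠ L i := fun h => hne (congrArg Prod.fst (hLinj h))
        exact lt_of_le_of_ne hle hne'
    · intro u hu u' hu' heq
      by_cases c1 : L i ∈ Set.Icc (A₁ u) (B₁ u) <;>
        by_cases c2 : L i ∈ Set.Icc (A₁ u') (B₁ u') <;>
        simp only [c1, c2, if_pos, if_neg, if_true, if_false, Prod.mk.injEq] at heq <;>
        tauto
  -- rank is strictly monotone in L, hence injective
  have hrank_lt : ∀ i j : Fin n × Bool, L i < L j → rank i < rank j := by
    intro i j hij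
    have hsub : insert i (Finset.univ.filter (fun k => L k < L i)) ⊆
        Finset.univ.filter (fun k => L k < L j) := by
      intro k hk
      rcases Finset.mem_insert.mp hk with h | h
      · subst h; exact Finset.mem_filter.mpr ⟨Finset.mem_univ _, hij⟩
      · exact Finset.mem_filter.mpr
          ⟨Finset.mem_univ _, lt_trans (Finset.mem_filter.mp h).2 hij⟩
    have hni : i ∉ Finset.univ.filter (fun k => L k < L i) := by simp
    have hc := Finset.card_le_card hsub
    rw [Finset.card_insert_of_notMem hni] at hc
    exact hc
  have hrank_inj : ∀ i j : Fin n × Bool, rank i = rank j → i = j := by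
    intro i j h
    rcases lt_trichotomy (L i) (L j) with hlt | heq | hgt
    · exact absurd h (Nat.ne_of_lt (hrank_lt i j hlt))
    · exact hLinj heq
    · exact absurd h.symm (Nat.ne_of_lt (hrank_lt j i hgt))
  have hrank_ub : ∀ i : Fin n × Bool, rank i < 2 * n := by
    intro i
    have hsub : Finset.univ.filter (fun k => L k < L i) ⊆ Finset.univ.erase i := by
      intro k hk
      refine Finset.mem_erase.mpr ⟨?_, Finset.mem_univ _⟩
      intro h; subst h
      exact lt_irrefl _ (Finset.mem_filter.mp hk).2
    have hc := Finset.card_le_card hsub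
    rw [Finset.card_erase_of_mem (Finset.mem_univ i)] at hc
    have hcu : (Finset.univ : Finset (Fin n × Bool)).card = 2 * n := by
      simp [mul_comm]
    rw [hcu] at hc
    have hre : rank i = (Finset.univ.filter (fun j => L j < L i)).card := rfl
    omega
  -- main counting: ordered pairs inject into (slot, coverer, flag)
  have key : ∀ p : Fin n × Fin n, p.1 ≠ p.2 →
      ∃ s : (Fin n × Bool) × Fin n × Bool, s.2.1 ∈ S s.1 ∧
        (s.2.2 = true → p = (s.2.1, s.1.1)) ∧ (s.2.2 = false → p = (s.1.1, s.2.1)) := by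
    rintro ⟨u, v⟩ hne
    simp only at hne
    obtain ⟨q, hqu, hqv⟩ := hpair u v
    obtain ⟨bu, hbu⟩ := happrox u q hqu
    obtain ⟨bv, hbv⟩ := happrox v q hqv
    have hneq : L (u, bu) ≠ L (v, bv) := by
      intro h
      exact hne (congrArg Prod.fst (hLinj h))
    rcases lt_or_gt_of_ne hneq with hlt | hgt
    · refine ⟨⟨(v, bv), u, true⟩, ?_, fun _ => rfl, fun h => by simp at h⟩
      rw [hSdef]
      refine Finset.mem_filter.mpr ⟨Finset.mem_univ _, hne, ?_⟩
      exact hmem (u, bu) _ ⟨le_of_lt hlt, le_trans hbv.1 hbu.2⟩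
    · refine ⟨⟨(u, bu), v, false⟩, ?_, fun h => by simp at h, fun _ => rfl⟩
      rw [hSdef]
      refine Finset.mem_filter.mpr ⟨Finset.mem_univ _, fun h => hne h.symm, ?_⟩
      exact hmem (v, bv) _ ⟨le_of_lt hgt, le_trans hbu.1 hbv.2⟩
  have hpairs : n * n - n ≤ (∑ i : Fin n × Bool, (S i).card) * 2 := by
    set T : Finset ((Fin n × Bool) × Fin n × Bool) :=
      Finset.univ.filter (fun s => s.2.1 ∈ S s.1) with hTdef
    have hTcard : T.card ≤ (∑ i : Fin n × Bool, (S i).card) * 2 := by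
      have : T ⊆ (Finset.univ.sigma (fun i : Fin n × Bool =>
          (S i) ×ˢ (Finset.univ : Finset Bool))).image (fun s => (s.1, s.2)) := by
        intro s hs
        rw [hTdef] at hs
        simp only [Finset.mem_filter] at hs
        refine Finset.mem_image.mpr ⟨⟨s.1, s.2⟩, ?_, rfl⟩
        exact Finset.mem_sigma.mpr ⟨Finset.mem_univ _,
          Finset.mem_product.mpr ⟨hs.2, Finset.mem_univ _⟩⟩
      calc T.card ≤ _ := Finset.card_le_card this
        _ ≤ (Finset.univ.sigma (fun i : Fin n × Bool =>
              (S i) ×ˢ (Finset.univ : Finset Bool))).card := Finset.card_image_le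
        _ = ∑ i : Fin n × Bool, ((S i) ×ˢ (Finset.univ : Finset Bool)).card :=
              Finset.card_sigma _ _
        _ = (∑ i : Fin n × Bool, (S i).card) * 2 := by
              rw [Finset.sum_mul]
              exact Finset.sum_congr rfl (fun i _ => by
                rw [Finset.card_product]
                simp)
    -- injection from offDiag into T
    let dflt : (Fin n × Bool) × Fin n × Bool := ⟨(⟨0, hn⟩, false), ⟨0, hn⟩, false⟩
    let f : Fin n × Fin n → (Fin n × Bool) × Fin n × Bool :=
      fun p => if h : p.1 ≠ p.2 then Classical.choose (key p h) else dflt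
    have hrec : ∀ p : Fin n × Fin n, p.1 ≠ p.2 →
        p = (if (f p).2.2 = true then ((f p).2.1, (f p).1.1) else ((f p).1.1, (f p).2.1)) := by
      intro p h
      have hfp : f p = Classical.choose (key p h) := dif_pos h
      obtain ⟨-, h2, h3⟩ := Classical.choose_spec (key p h)
      rw [hfp]
      cases hb : (Classical.choose (key p h)).2.2
      · simpa [hb] using h3 hb
      · simpa [hb] using h2 hb
    have hmaps : ∀ p ∈ (Finset.univ : Finset (Fin n)).offDiag, f p ∈ T := by
      intro p hp
      have hne : p.1 ≠ p.2 := (Finset.mem_offDiag.mp hp).2.2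
      have hfp : f p = Classical.choose (key p hne) := dif_pos hne
      obtain ⟨h1, -, -⟩ := Classical.choose_spec (key p hne)
      rw [hTdef]
      refine Finset.mem_filter.mpr ⟨Finset.mem_univ _, ?_⟩
      rw [hfp]; exact h1
    have hinj : Set.InjOn f ((Finset.univ : Finset (Fin n)).offDiag : Set (Fin n × Fin n)) := by
      intro p hp q hq hfeq
      have hnp : p.1 ≠ p.2 := by
        have := hp
        simp only [Finset.coe_offDiag, Finset.coe_univ, Set.mem_offDiag] at this
        exact this.2.2
      have hnq : q.1 ≠ q.2 := by
        have := hq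
        simp only [Finset.coe_offDiag, Finset.coe_univ, Set.mem_offDiag] at this
        exact this.2.2
      rw [hrec p hnp, hrec q hnq, hfeq]
    have hcle := Finset.card_le_card_of_injOn f hmaps hinj
    rw [Finset.offDiag_card, Finset.card_univ, Fintype.card_fin] at hcle
    omega
  -- sum the per-endpoint bounds
  have hsum1 : ∑ i : Fin n × Bool, (S i).card ≤
      ∑ i : Fin n × Bool, min (a - 1) (rank i) :=
    Finset.sum_le_sum (fun i _ => le_min (by have := hcard1 i; omega) (hcard2 i))
  have hsum2 : ∑ i : Fin n × Bool, min (a - 1) (rank i) ≤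
      ∑ k ∈ Finset.range (2 * n), min (a - 1) k := by
    calc ∑ i : Fin n × Bool, min (a - 1) (rank i)
        = ∑ k ∈ Finset.univ.image rank, min (a - 1) k :=
          (Finset.sum_image (fun i _ j _ h => hrank_inj i j h)).symm
      _ ≤ ∑ k ∈ Finset.range (2 * n), min (a - 1) k := by
          apply Finset.sum_le_sum_of_subset
          intro k hk
          obtain ⟨i, -, rfl⟩ := Finset.mem_image.mp hk
          exact Finset.mem_range.mpr (hrank_ub i)
  have hsplit : ∑ k ∈ Finset.range (2 * n), min (a - 1) k
      = (∑ k ∈ Finset.range a, k) + (2 * n - a) * (a - 1) := by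
    rw [Finset.range_eq_Ico, ← Finset.sum_Ico_consecutive _ (Nat.zero_le a)
      (by omega : a ≤ 2 * n)]
    congr 1
    · rw [← Finset.range_eq_Ico]
      exact Finset.sum_congr rfl (fun k hk =>
        min_eq_right (by have := Finset.mem_range.mp hk; omega))
    · rw [Finset.sum_congr rfl (fun k hk => min_eq_left
        (by have := (Finset.mem_Ico.mp hk).1; omega))]
      rw [Finset.sum_const, Nat.card_Ico, smul_eq_mul]
  have hgauss : (∑ k ∈ Finset.range a, k) * 2 = a * (a - 1) :=
    Finset.sum_range_id_mul_two a
  have hmain : n * n - n ≤ a * (a - 1) + (2 * n - a) * (a - 1) * 2 := by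
    calc n * n - n ≤ (∑ i : Fin n × Bool, (S i).card) * 2 := hpairs
      _ ≤ (∑ i : Fin n × Bool, min (a - 1) (rank i)) * 2 :=
          Nat.mul_le_mul_right 2 hsum1
      _ ≤ (∑ k ∈ Finset.range (2 * n), min (a - 1) k) * 2 :=
          Nat.mul_le_mul_right 2 hsum2
      _ = ((∑ k ∈ Finset.range a, k) + (2 * n - a) * (a - 1)) * 2 := by rw [hsplit]
      _ = a * (a - 1) + (2 * n - a) * (a - 1) * 2 := by rw [add_mul, hgauss]
  -- cast to ℤ and finish
  have hcast : ((n : ℤ) * n - n) ≤ (a : ℤ) * ((a : ℤ) - 1) + (2 * n - a) * ((a : ℤ) - 1) * 2 := by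
    have h1 : ((n * n - n : ℕ) : ℤ) ≤ ((a * (a - 1) + (2 * n - a) * (a - 1) * 2 : ℕ) : ℤ) :=
      Nat.cast_le.mpr hmain
    push_cast [Nat.cast_sub (by nlinarith : n ≤ n * n), Nat.cast_sub ha1,
      Nat.cast_sub (by omega : a ≤ 2 * n)] at h1
    convert h1 using 2
  have hring : (4 * (n : ℤ) - a) * ((a : ℤ) - 1)
      = (a : ℤ) * ((a : ℤ) - 1) + (2 * n - a) * ((a : ℤ) - 1) * 2 := by ring
  have hfin : (n : ℤ) * ((n : ℤ) - 1) = (n : ℤ) * n - n := by ring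
  rw [ge_iff_le, hfin, hring]
  exact hcast
end

section
/- Let S be a pairwise-intersecting double-interval society with n voters and approval number a(S), with all interval endpoints distinct. Then a(S) ≥ ⌈2n + 1/2 − √(3n² − n + 1/4)⌉. -/
lemma gauss_sum' (a : ℕ) : 2 * ∑ k ∈ Finset.Icc 1 a, k = a * (a + 1) := by
  induction a with
  | zero => simp
  | succ a ih =>
    rw [Finset.sum_Icc_succ_top (by omega), Nat.mul_add, ih]
    ring

lemma sum_min_Icc (a N : ℕ) (h : a ≤ N) :
    2 * (∑ k ∈ Finset.Icc 1 N, min a k) + a * a = 2 * N * a + a := by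
  induction N, h using Nat.le_induction with
  | base =>
    have h1 : ∑ k ∈ Finset.Icc 1 a, min a k = ∑ k ∈ Finset.Icc 1 a, k := by
      apply Finset.sum_congr rfl
      intro k hk
      simp only [Finset.mem_Icc] at hk
      omega
    rw [h1]
    have := gauss_sum' a
    nlinarith [this]
  | succ N hN ih =>
    rw [Finset.sum_Icc_succ_top (by omega)]
    have hm : min a (N + 1) = a := by omega
    rw [hm]
    nlinarith [ih]



/-- Let `S` be a pairwise-intersecting double-interval society with `n` voters
and approval number `a`, with all interval endpoints distinct.  Then
`a ≥ ⌈2n + 1/2 − √(3n² − n + 1/4)⌉`. -/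
theorem society_approval_lower_bound (n a : ℕ)
    (A₁ B₁ A₂ B₂ : Fin n → ℝ)
    (h₁ : ∀ v, A₁ v ≤ B₁ v) (h₂ : ∀ v, B₁ v < A₂ v) (h₃ : ∀ v, A₂ v ≤ B₂ v)
    (hdistinct : Function.Injective (fun x : Fin n × Fin 4 =>
      if x.2 = 0 then A₁ x.1 else if x.2 = 1 then B₁ x.1
      else if x.2 = 2 then A₂ x.1 else B₂ x.1))
    (hpair : ∀ u v : Fin n, ∃ p : ℝ,
      p ∈ approvalSet (A₁ u) (B₁ u) (A₂ u) (B₂ u) ∧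
      p ∈ approvalSet (A₁ v) (B₁ v) (A₂ v) (B₂ v))
    (hub : ∀ p : ℝ,
      Nat.card {v : Fin n // p ∈ approvalSet (A₁ v) (B₁ v) (A₂ v) (B₂ v)} ≤ a)
    (hmax : ∃ p : ℝ,
      Nat.card {v : Fin n // p ∈ approvalSet (A₁ v) (B₁ v) (A₂ v) (B₂ v)} = a) :
    (a : ℤ) ≥ ⌈2 * (n : ℝ) + 1 / 2 - Real.sqrt (3 * (n : ℝ) ^ 2 - n + 1 / 4)⌉ := by
  classical
  set S : Fin n → Set ℝ := fun v => approvalSet (A₁ v) (B₁ v) (A₂ v) (B₂ v) with hSdef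
  -- endpoint distinctness facts
  have hA11 : ∀ u v, A₁ u = A₁ v → u = v := by
    intro u v h
    have := hdistinct (a₁ := (u, (0 : Fin 4))) (a₂ := (v, (0 : Fin 4))) (by simpa using h)
    exact (Prod.ext_iff.mp this).1
  have hA22 : ∀ u v, A₂ u = A₂ v → u = v := by
    intro u v h
    have := hdistinct (a₁ := (u, (2 : Fin 4))) (a₂ := (v, (2 : Fin 4))) (by simpa using h)
    exact (Prod.ext_iff.mp this).1
  have hA12 : ∀ u v, A₁ u ≠ A₂ v := by
    intro u v h
    have := hdistinct (a₁ := (u, (0 : Fin 4))) (a₂ := (v, (2 : Fin 4))) (by simpa using h)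
    have h2 := (Prod.ext_iff.mp this).2
    simp at h2
  -- left-endpoint labels
  set ep : Fin n × Fin 2 → ℝ := fun ℓ => if ℓ.2 = 0 then A₁ ℓ.1 else A₂ ℓ.1 with hepdef
  have hepinj : Function.Injective ep := by
    rintro ⟨u, i⟩ ⟨v, j⟩ h
    fin_cases i <;> fin_cases j <;> simp only [hepdef] at h <;> simp at h
    · exact Prod.ext (hA11 u v h) rfl
    · exact absurd h (hA12 u v)
    · exact absurd h.symm (hA12 v u)
    · exact Prod.ext (hA22 u v h) rfl
  have hepS : ∀ ℓ : Fin n × Fin 2, ep ℓ ∈ S ℓ.1 := by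
    rintro ⟨v, i⟩
    fin_cases i
    · exact Or.inl ⟨le_refl _, h₁ v⟩
    · exact Or.inr ⟨le_refl _, h₃ v⟩
  -- multiplicity
  set mcard : ℝ → ℕ := fun p => (Finset.univ.filter (fun v => p ∈ S v)).card with hmcdef
  have hnatcard : ∀ p : ℝ, Nat.card {v : Fin n // p ∈ S v} = mcard p := by
    intro p
    rw [Nat.card_eq_fintype_card, Fintype.card_subtype]
  have hub' : ∀ p : ℝ, mcard p ≤ a := by
    intro p
    rw [← hnatcard]
    exact hub p
  have haln : a ≤ n := by
    obtain ⟨p, hp⟩ := hmax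
    rw [hnatcard] at hp
    calc a = mcard p := hp.symm
    _ ≤ (Finset.univ : Finset (Fin n)).card := Finset.card_filter_le _ _
    _ = n := by simp
  -- least point of pairwise intersections
  have hSco : ∀ v, IsCompact (S v) := fun v => isCompact_Icc.union isCompact_Icc
  have hScl : ∀ v, IsClosed (S v) := fun v => (isClosed_Icc.union isClosed_Icc)
  have hqex : ∀ u v : Fin n, ∃ q, IsLeast (S u ∩ S v) q := by
    intro u v
    obtain ⟨p, hp1, hp2⟩ := hpair u v
    exact ((hSco u).inter_right (hScl v)).exists_isLeast ⟨p, hp1, hp2⟩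
  choose q hq using hqex
  -- the least point is a left endpoint of u or v
  have hqep : ∀ u v : Fin n, ∃ ℓ : Fin n × Fin 2, (ℓ.1 = u ∨ ℓ.1 = v) ∧ ep ℓ = q u v := by
    intro u v
    obtain ⟨⟨hu, hv⟩, hmin⟩ := hq u v
    have key : ∀ (x b y d : ℝ), x ≤ q u v → q u v ≤ b → y ≤ q u v → q u v ≤ d →
        q u v ≠ x → q u v ≠ y →
        max x y ∈ Set.Icc x b ∧ max x y ∈ Set.Icc y d ∧ max x y < q u v := by
      intro x b y d hx hb hy hd hnx hny
      have hx' : x < q u v := lt_of_le_of_ne hx (Ne.symm hnx)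
      have hy' : y < q u v := lt_of_le_of_ne hy (Ne.symm hny)
      have hm : max x y < q u v := max_lt hx' hy'
      exact ⟨⟨le_max_left _ _, le_trans hm.le hb⟩, ⟨le_max_right _ _, le_trans hm.le hd⟩, hm⟩
    rcases hu with h | h <;> rcases hv with h' | h'
    · by_cases e1 : q u v = A₁ u
      · exact ⟨(u, 0), Or.inl rfl, by simp [hepdef, e1]⟩
      by_cases e2 : q u v = A₁ v
      · exact ⟨(v, 0), Or.inr rfl, by simp [hepdef, e2]⟩
      exfalso
      obtain ⟨m1, m2, hm⟩ := key _ _ _ _ h.1 h.2 h'.1 h'.2 e1 e2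
      exact absurd (hmin ⟨Or.inl m1, Or.inl m2⟩) (not_le.mpr hm)
    · by_cases e1 : q u v = A₁ u
      · exact ⟨(u, 0), Or.inl rfl, by simp [hepdef, e1]⟩
      by_cases e2 : q u v = A₂ v
      · exact ⟨(v, 1), Or.inr rfl, by simp [hepdef, e2]⟩
      exfalso
      obtain ⟨m1, m2, hm⟩ := key _ _ _ _ h.1 h.2 h'.1 h'.2 e1 e2
      exact absurd (hmin ⟨Or.inl m1, Or.inr m2⟩) (not_le.mpr hm)
    · by_cases e1 : q u v = A₂ u
      · exact ⟨(u, 1), Or.inl rfl, by simp [hepdef, e1]⟩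
      by_cases e2 : q u v = A₁ v
      · exact ⟨(v, 0), Or.inr rfl, by simp [hepdef, e2]⟩
      exfalso
      obtain ⟨m1, m2, hm⟩ := key _ _ _ _ h.1 h.2 h'.1 h'.2 e1 e2
      exact absurd (hmin ⟨Or.inr m1, Or.inl m2⟩) (not_le.mpr hm)
    · by_cases e1 : q u v = A₂ u
      · exact ⟨(u, 1), Or.inl rfl, by simp [hepdef, e1]⟩
      by_cases e2 : q u v = A₂ v
      · exact ⟨(v, 1), Or.inr rfl, by simp [hepdef, e2]⟩
      exfalso
      obtain ⟨m1, m2, hm⟩ := key _ _ _ _ h.1 h.2 h'.1 h'.2 e1 e2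
      exact absurd (hmin ⟨Or.inr m1, Or.inr m2⟩) (not_le.mpr hm)
  choose lab hlab1 hlab2 using hqep
  -- the target finset
  set T : Finset ((Fin n × Fin 2) × Fin n) :=
    Finset.univ.filter (fun y => y.2 ≠ y.1.1 ∧ ep y.1 ∈ S y.2) with hTdef
  -- the assignment map
  set g : Fin n × Fin n → ((Fin n × Fin 2) × Fin n) × Bool := fun p =>
    ((lab (min p.1 p.2) (max p.1 p.2),
      if (lab (min p.1 p.2) (max p.1 p.2)).1 = min p.1 p.2 then max p.1 p.2 else min p.1 p.2),
     decide (p.1 < p.2)) with hgdef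
  -- structure of lab for sorted pairs
  have hg : ∀ u v : Fin n, u < v →
      (((lab u v).1 = u ∧ (if (lab u v).1 = u then v else u) = v) ∨
       ((lab u v).1 = v ∧ (if (lab u v).1 = u then v else u) = u)) := by
    intro u v huv
    by_cases e : (lab u v).1 = u
    · exact Or.inl ⟨e, by simp [e]⟩
    · rcases hlab1 u v with h | h
      · exact absurd h e
      · exact Or.inr ⟨h, by simp [e]⟩
  -- counting: offDiag injects into T ×ˢ univ
  have hcount1 : n * n - n ≤ 2 * T.card := by
    have hmaps : ∀ p ∈ (Finset.univ : Finset (Fin n)).offDiag, g p ∈ T ×ˢ (Finset.univ : Finset Bool) := by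
      rintro ⟨x₁, x₂⟩ hp
      simp only [Finset.mem_offDiag] at hp
      have hne : x₁ ≠ x₂ := hp.2.2
      have huv : min x₁ x₂ < max x₁ x₂ := min_lt_max.mpr hne
      set u := min x₁ x₂
      set v := max x₁ x₂
      have hqmem := (hq u v).1
      rw [Finset.mem_product]
      refine ⟨?_, Finset.mem_univ _⟩
      rw [hTdef, Finset.mem_filter]
      refine ⟨Finset.mem_univ _, ?_⟩
      rcases hg u v huv with ⟨e, hx⟩ | ⟨e, hx⟩
      · constructor
        · simp only [hgdef]
          rw [hx, e]
          exact (ne_of_lt huv).symm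
        · simp only [hgdef]
          rw [hx, hlab2 u v]
          exact hqmem.2
      · constructor
        · simp only [hgdef]
          rw [hx, e]
          exact (ne_of_lt huv)
        · simp only [hgdef]
          rw [hx, hlab2 u v]
          exact hqmem.1
    have hinj : Set.InjOn g ↑(Finset.univ : Finset (Fin n)).offDiag := by
      rintro ⟨x₁, x₂⟩ hp ⟨y₁, y₂⟩ hp' heq
      simp only [Finset.coe_offDiag, Set.mem_offDiag] at hp hp'
      have hb : decide (x₁ < x₂) = decide (y₁ < y₂) := congrArg Prod.snd heq
      have h1 : (lab (min x₁ x₂) (max x₁ x₂)) = (lab (min y₁ y₂) (max y₁ y₂)) := by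
        have := congrArg Prod.fst heq
        exact congrArg Prod.fst this
      have h2 : (if (lab (min x₁ x₂) (max x₁ x₂)).1 = min x₁ x₂ then max x₁ x₂ else min x₁ x₂)
          = (if (lab (min y₁ y₂) (max y₁ y₂)).1 = min y₁ y₂ then max y₁ y₂ else min y₁ y₂) := by
        have := congrArg Prod.fst heq
        exact congrArg Prod.snd this
      have hxuv : min x₁ x₂ < max x₁ x₂ := min_lt_max.mpr hp.2.2
      have hyuv : min y₁ y₂ < max y₁ y₂ := min_lt_max.mpr hp'.2.2
      have hsorted : min x₁ x₂ = min y₁ y₂ ∧ max x₁ x₂ = max y₁ y₂ := by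
        rcases hg _ _ hxuv with ⟨e, hx⟩ | ⟨e, hx⟩ <;>
          rcases hg _ _ hyuv with ⟨e', hy⟩ | ⟨e', hy⟩
        · refine ⟨?_, ?_⟩
          · rw [← e, ← e', h1]
          · rw [← hx, ← hy, h2]
        · exfalso
          have q1 : min x₁ x₂ = max y₁ y₂ := by rw [← e, ← e', h1]
          have q2 : max x₁ x₂ = min y₁ y₂ := by rw [← hx, ← hy, h2]
          rw [q1, q2] at hxuv
          exact absurd hxuv (not_lt.mpr hyuv.le)
        · exfalso
          have q1 : min x₁ x₂ = max y₁ y₂ := by rw [← hx, ← hy, h2]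
          have q2 : max x₁ x₂ = min y₁ y₂ := by rw [← e, ← e', h1]
          rw [q1, q2] at hxuv
          exact absurd hxuv (not_lt.mpr hyuv.le)
        · refine ⟨?_, ?_⟩
          · rw [← hx, ← hy, h2]
          · rw [← e, ← e', h1]
      -- recover original pairs from sorted pairs + bool
      by_cases hlt : x₁ < x₂
      · have hlt' : y₁ < y₂ := by
          by_contra hc
          simp [hlt, hc] at hb
        have e1 : min x₁ x₂ = x₁ := min_eq_left hlt.le
        have e2 : max x₁ x₂ = x₂ := max_eq_right hlt.le
        have e3 : min y₁ y₂ = y₁ := min_eq_left hlt'.le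
        have e4 : max y₁ y₂ = y₂ := max_eq_right hlt'.le
        have := hsorted
        rw [e1, e2, e3, e4] at this
        exact Prod.ext this.1 this.2
      · have hlt2 : x₂ < x₁ := (Ne.lt_or_gt hp.2.2).resolve_left hlt
        have hlt' : ¬ y₁ < y₂ := by
          by_contra hc
          simp [hlt, hc] at hb
        have hlt2' : y₂ < y₁ := (Ne.lt_or_gt hp'.2.2).resolve_left hlt'
        have e1 : min x₁ x₂ = x₂ := min_eq_right hlt2.le
        have e2 : max x₁ x₂ = x₁ := max_eq_left hlt2.le
        have e3 : min y₁ y₂ = y₂ := min_eq_right hlt2'.le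
        have e4 : max y₁ y₂ = y₁ := max_eq_left hlt2'.le
        have := hsorted
        rw [e1, e2, e3, e4] at this
        exact Prod.ext this.2 this.1
    have hcard := Finset.card_le_card_of_injOn g hmaps hinj
    rw [Finset.offDiag_card, Finset.card_product] at hcard
    simp only [Finset.card_univ, Fintype.card_fin, Fintype.card_bool] at hcard
    omega
  -- fiberwise bound : T.card + 2n ≤ ∑ min a (rank ℓ)
  set rank : Fin n × Fin 2 → ℕ :=
    fun ℓ => (Finset.univ.filter (fun ℓ' => ep ℓ' ≤ ep ℓ)).card with hrankdef
  have hfiber : ∀ ℓ : Fin n × Fin 2,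
      (T.filter (fun y => y.1 = ℓ)).card + 1 ≤ mcard (ep ℓ) := by
    intro ℓ
    have hsub : (T.filter (fun y => y.1 = ℓ)).card ≤
        ((Finset.univ.filter (fun v => ep ℓ ∈ S v)).erase ℓ.1).card := by
      apply Finset.card_le_card_of_injOn (fun y => y.2)
      · rintro ⟨ℓ', x⟩ hy
        simp only [Finset.mem_coe, hTdef, Finset.mem_filter, Finset.mem_univ, true_and] at hy
        obtain ⟨⟨hne, hmem⟩, hfst⟩ := hy
        subst hfst
        simp only [Finset.mem_coe, Finset.mem_erase, Finset.mem_filter, Finset.mem_univ, true_and]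
        exact ⟨hne, hmem⟩
      · rintro ⟨ℓ₁, x₁⟩ hy₁ ⟨ℓ₂, x₂⟩ hy₂ hxy
        simp only [Finset.mem_coe, Finset.mem_filter] at hy₁ hy₂
        exact Prod.ext (hy₁.2.trans hy₂.2.symm) hxy
    have hmem : ℓ.1 ∈ Finset.univ.filter (fun v => ep ℓ ∈ S v) := by
      simp only [Finset.mem_filter, Finset.mem_univ, true_and]
      exact hepS ℓ
    have herase := Finset.card_erase_of_mem hmem
    have hpos : 0 < (Finset.univ.filter (fun v => ep ℓ ∈ S v)).card :=
      Finset.card_pos.mpr ⟨ℓ.1, hmem⟩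
    show (T.filter (fun y => y.1 = ℓ)).card + 1 ≤ (Finset.univ.filter (fun v => ep ℓ ∈ S v)).card
    omega
  have hrank : ∀ ℓ : Fin n × Fin 2, mcard (ep ℓ) ≤ rank ℓ := by
    intro ℓ
    apply Finset.card_le_card_of_injOn
      (fun x => if ep ℓ ∈ Set.Icc (A₁ x) (B₁ x) then ((x, 0) : Fin n × Fin 2) else (x, 1))
    · intro x hx
      simp only [Finset.mem_coe, Finset.mem_filter, Finset.mem_univ, true_and] at hx
      by_cases hc : ep ℓ ∈ Set.Icc (A₁ x) (B₁ x)
      · simp only [hc, if_pos]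
        simp only [Finset.mem_coe, Finset.mem_filter, Finset.mem_univ, true_and, hepdef]
        simpa using hc.1
      · simp only [hc, if_neg, not_false_iff]
        have : ep ℓ ∈ Set.Icc (A₂ x) (B₂ x) := by
          rcases hx with h | h
          · exact absurd h hc
          · exact h
        simp only [Finset.mem_coe, Finset.mem_filter, Finset.mem_univ, true_and, hepdef]
        simpa using this.1
    · intro x₁ hx₁ x₂ hx₂ hxy
      by_cases hc₁ : ep ℓ ∈ Set.Icc (A₁ x₁) (B₁ x₁) <;>
        by_cases hc₂ : ep ℓ ∈ Set.Icc (A₁ x₂) (B₁ x₂) <;>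
        simp [hc₁, hc₂] at hxy <;> first | exact hxy | exact hxy.1
  -- rank is a bijection onto Icc 1 (2n)
  have hrankmono : ∀ ℓ ℓ' : Fin n × Fin 2, ep ℓ < ep ℓ' → rank ℓ < rank ℓ' := by
    intro ℓ ℓ' hlt
    apply Finset.card_lt_card
    constructor
    · intro x hx
      simp only [Finset.mem_filter, Finset.mem_univ, true_and] at hx ⊢
      exact hx.trans hlt.le
    · intro hcon
      have : ℓ' ∈ Finset.univ.filter (fun x => ep x ≤ ep ℓ') := by
        simp
      have := hcon this
      simp only [Finset.mem_filter, Finset.mem_univ, true_and] at this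
      exact absurd hlt (not_lt.mpr this)
  have hrinj : Set.InjOn rank ↑(Finset.univ : Finset (Fin n × Fin 2)) := by
    intro ℓ _ ℓ' _ h
    rcases lt_trichotomy (ep ℓ) (ep ℓ') with hc | hc | hc
    · exact absurd h (Nat.ne_of_lt (hrankmono _ _ hc))
    · exact hepinj hc
    · exact absurd h.symm (Nat.ne_of_lt (hrankmono _ _ hc))
  have himage : (Finset.univ : Finset (Fin n × Fin 2)).image rank = Finset.Icc 1 (2 * n) := by
    apply Finset.eq_of_subset_of_card_le
    · intro k hk
      simp only [Finset.mem_image] at hk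
      obtain ⟨ℓ, _, rfl⟩ := hk
      simp only [Finset.mem_Icc]
      constructor
      · apply Finset.card_pos.mpr
        exact ⟨ℓ, by simp⟩
      · calc rank ℓ ≤ (Finset.univ : Finset (Fin n × Fin 2)).card := Finset.card_filter_le _ _
        _ = 2 * n := by simp [Fintype.card_prod, mul_comm]
    · rw [Finset.card_image_of_injOn hrinj, Nat.card_Icc]
      simp [Fintype.card_prod, mul_comm]
  have hsum_eq : ∑ ℓ : Fin n × Fin 2, min a (rank ℓ) = ∑ k ∈ Finset.Icc 1 (2 * n), min a k := by
    rw [← himage, Finset.sum_image (fun x hx y hy h => hrinj hx hy h)]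
  -- put it together in ℕ
  have hTcard : T.card + 2 * n ≤ ∑ k ∈ Finset.Icc 1 (2 * n), min a k := by
    rw [← hsum_eq]
    have := Finset.card_eq_sum_card_fiberwise
      (f := fun y : (Fin n × Fin 2) × Fin n => y.1) (s := T)
      (t := (Finset.univ : Finset (Fin n × Fin 2))) (fun y _ => Finset.mem_univ _)
    rw [this]
    have h2n : (Finset.univ : Finset (Fin n × Fin 2)).card = 2 * n := by
      simp [Fintype.card_prod, mul_comm]
    calc (∑ ℓ : Fin n × Fin 2, (T.filter (fun y => y.1 = ℓ)).card) + 2 * n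
        = ∑ ℓ : Fin n × Fin 2, ((T.filter (fun y => y.1 = ℓ)).card + 1) := by
          rw [Finset.sum_add_distrib]
          simp [h2n]
      _ ≤ ∑ ℓ : Fin n × Fin 2, min a (rank ℓ) := by
          apply Finset.sum_le_sum
          intro ℓ _
          exact le_min ((hfiber ℓ).trans (hub' _)) ((hfiber ℓ).trans (hrank ℓ))
  have hgauss := sum_min_Icc a (2 * n) (by omega)
  -- the quadratic inequality, in ℤ
  have hquad : (n : ℤ) * n + 3 * n + a * a ≤ 4 * n * a + a := by
    have c1 : n * n ≤ 2 * T.card + n := by omega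
    have c2 := hTcard
    have c3 := hgauss
    push_cast
    nlinarith [c1, c2, c3]
  -- final arithmetic
  rw [ge_iff_le, Int.ceil_le]
  push_cast
  have h0 : (0:ℝ) ≤ 3 * (n:ℝ) ^ 2 - n + 1 / 4 := by nlinarith [sq_nonneg ((n:ℝ) - 1/6)]
  have keyR : (n:ℝ) * n + 3 * n + a * a ≤ 4 * n * a + a := by exact_mod_cast hquad
  by_cases hc : 2 * (n:ℝ) + 1 / 2 - a ≤ 0
  · have := Real.sqrt_nonneg (3 * (n:ℝ) ^ 2 - n + 1 / 4)
    linarith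
  · push_neg at hc
    have hsq : (2 * (n:ℝ) + 1 / 2 - a) ≤ Real.sqrt (3 * (n:ℝ) ^ 2 - n + 1 / 4) := by
      rw [Real.le_sqrt (by linarith) h0]
      nlinarith [keyR]
    linarith
end

section
/- There is no double-8 string with diameter at most 2; equivalently, δ(8) ≥ 3, so any double-interval society on 8 voters arising from a double-8 string has approval number at least 4. -/
lemma no_dd8 : ∀ s : Fin (2 * 8) → Fin 8, IsDoubleString 8 s → ¬ DiamLE 8 2 s := by
  intro s hs hd
  set a := s 0 with ha
  obtain ⟨x, y, hxy, hset⟩ := Finset.card_eq_two.mp (hs a)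
  have h0 : (0 : Fin (2 * 8)) ∈ Finset.univ.filter (fun i => s i = a) := by
    simp [ha]
  have hmem' : ∀ i : Fin (2 * 8), s i = a → i = x ∨ i = y := by
    intro i hi
    have : i ∈ Finset.univ.filter (fun j => s j = a) := by simp [hi]
    rw [hset] at this
    simpa using this
  have hx : s x = a := by
    have : x ∈ ({x, y} : Finset (Fin (2 * 8))) := by simp
    rw [← hset] at this; simpa using this
  have hy : s y = a := by
    have : y ∈ ({x, y} : Finset (Fin (2 * 8))) := by simp
    rw [← hset] at this; simpa using this
  rw [hset] at h0
  simp at h0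
  obtain ⟨i2, hi2ne, hi2a, hmem⟩ :
      ∃ i2 : Fin (2 * 8), i2 ≠ 0 ∧ s i2 = a ∧
        ∀ i : Fin (2 * 8), s i = a → i = 0 ∨ i = i2 := by
    rcases h0 with h0 | h0
    · refine ⟨y, by subst h0; exact hxy.symm, hy, ?_⟩
      intro i hi
      rcases hmem' i hi with h | h
      · left; rw [h, ← h0]
      · right; exact h
    · refine ⟨x, by subst h0; exact hxy, hx, ?_⟩
      intro i hi
      rcases hmem' i hi with h | h
      · right; exact h
      · left; rw [h, ← h0]
  set N : Finset (Fin (2 * 8)) :=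
    Finset.univ.filter
      (fun i => s i ≠ a ∧ (Nat.dist i.val 0 ≤ 2 ∨ Nat.dist i.val i2.val ≤ 2)) with hN
  -- lower bound: 7 ≤ N.card
  have himg : Finset.univ.erase a ⊆ N.image s := by
    intro b hb
    have hba : b ≠ a := (Finset.mem_erase.mp hb).1
    obtain ⟨i, j, hi, hj, hdist⟩ := hd a b (Ne.symm hba)
    refine Finset.mem_image.mpr ⟨j, ?_, hj⟩
    rw [hN]
    simp only [Finset.mem_filter, Finset.mem_univ, true_and]
    refine ⟨by rw [hj]; exact hba, ?_⟩
    rcases hmem i hi with h | h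
    · left; rw [h] at hdist; rw [Nat.dist_comm] at hdist; simpa using hdist
    · right; rw [h] at hdist; rw [Nat.dist_comm] at hdist; exact hdist
  have hlow : 7 ≤ N.card := by
    have h1 : (Finset.univ.erase a).card = 7 := by
      rw [Finset.card_erase_of_mem (Finset.mem_univ a)]
      simp
    calc 7 = (Finset.univ.erase a).card := h1.symm
      _ ≤ (N.image s).card := Finset.card_le_card himg
      _ ≤ N.card := Finset.card_image_le
  -- upper bound: N.card ≤ 6
  set A : Finset (Fin (2 * 8)) :=
    Finset.univ.filter (fun i => i.val ≤ 2 ∧ i ≠ 0) with hA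
  set B : Finset (Fin (2 * 8)) :=
    Finset.univ.filter (fun i => Nat.dist i.val i2.val ≤ 2 ∧ i ≠ i2) with hB
  have hsub : N ⊆ A ∪ B := by
    intro i hi
    rw [hN] at hi
    simp only [Finset.mem_filter, Finset.mem_univ, true_and] at hi
    obtain ⟨hne, hdd⟩ := hi
    have hne0 : i ≠ 0 := fun h => hne (h ▸ ha ▸ rfl)
    have hnei2 : i ≠ i2 := fun h => hne (h ▸ hi2a)
    rcases hdd with h | h
    · apply Finset.mem_union_left
      rw [hA]
      simp only [Finset.mem_filter, Finset.mem_univ, true_and]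
      refine ⟨?_, hne0⟩
      simpa [Nat.dist] using h
    · apply Finset.mem_union_right
      rw [hB]
      simp only [Finset.mem_filter, Finset.mem_univ, true_and]
      exact ⟨h, hnei2⟩
  have hAcard : A.card ≤ 2 := by
    have : A ⊆ ({1, 2} : Finset (Fin (2 * 8))) := by
      intro i hi
      rw [hA] at hi
      simp only [Finset.mem_filter, Finset.mem_univ, true_and] at hi
      obtain ⟨h1, h2⟩ := hi
      have hv : i.val ≠ 0 := fun h => h2 (Fin.ext h)
      have : i.val = 1 ∨ i.val = 2 := by omega
      rcases this with h | h
      · simp [Finset.mem_insert]; left; exact Fin.ext h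
      · simp [Finset.mem_insert]; right; exact Fin.ext h
    calc A.card ≤ ({1, 2} : Finset (Fin (2 * 8))).card := Finset.card_le_card this
      _ ≤ 2 := Finset.card_insert_le _ _ |>.trans (by simp)
  have hBcard : B.card ≤ 4 := by
    have hmaps : ∀ i ∈ B, i.val ∈ (Finset.Icc (i2.val - 2) (i2.val + 2)).erase i2.val := by
      intro i hi
      rw [hB] at hi
      simp only [Finset.mem_filter, Finset.mem_univ, true_and] at hi
      obtain ⟨h1, h2⟩ := hi
      rw [Finset.mem_erase, Finset.mem_Icc]
      simp only [Nat.dist] at h1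
      have : i.val ≠ i2.val := fun h => h2 (Fin.ext h)
      omega
    have := Finset.card_le_card_of_injOn Fin.val hmaps (fun i _ j _ h => Fin.ext h)
    have hicc : ((Finset.Icc (i2.val - 2) (i2.val + 2)).erase i2.val).card ≤ 4 := by
      rw [Finset.card_erase_of_mem (by rw [Finset.mem_Icc]; omega)]
      rw [Nat.card_Icc]
      omega
    omega
  have hup : N.card ≤ 6 := by
    calc N.card ≤ (A ∪ B).card := Finset.card_le_card hsub
      _ ≤ A.card + B.card := Finset.card_union_le _ _
      _ ≤ 6 := by omega
  omega

/-- There is no double-8 string with diameter at most 2; equivalently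
`δ(8) ≥ 3`. -/
theorem no_double_eight_diameter_two :
    (∀ s : Fin (2 * 8) → Fin 8, IsDoubleString 8 s → ¬ DiamLE 8 2 s) ∧
    3 ≤ delta 8 := by
  refine ⟨no_dd8, ?_⟩
  have hne : {d | ∃ s : Fin (2 * 8) → Fin 8, IsDoubleString 8 s ∧ DiamLE 8 d s}.Nonempty := by
    refine ⟨15, fun i => ⟨i.val / 2, by omega⟩, by unfold IsDoubleString; decide, ?_⟩
    intro a b hab
    refine ⟨⟨2 * a.val, by omega⟩, ⟨2 * b.val, by omega⟩, ?_, ?_, ?_⟩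
    · apply Fin.ext; simp
    · apply Fin.ext; simp
    · simp [Nat.dist]; omega
  refine le_csInf hne ?_
  intro d hd
  obtain ⟨s, hs, hdle⟩ := hd
  by_contra h
  push_neg at h
  apply no_dd8 s hs
  intro a b hab
  obtain ⟨i, j, hi, hj, hdist⟩ := hdle a b hab
  exact ⟨i, j, hi, hj, hdist.trans (by omega)⟩
end
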